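/- arXiv:1010.2187 — 8 statements merged into one kernel-verified Lean document; each statement's English description precedes it below -/
import Mathlib

section
/- Let N be a nilpotent n×n matrix over ℂ and let A be a symmetric n×n matrix over ℂ. Then exp(N) · A · (exp(N))ᵀ = A if and only if N·A + A·Nᵀ = 0. -/
open Matrix

section AuxExp

open NormedSpace

variable {E : Type*} [NormedAddCommGroup E] [NormedSpace ℂ E] [CompleteSpace E]

/-- Evaluating `exp` of a continuous endomorphism. -/
theorem exp_clm_apply (T : E →L[ℂ] E) (x : E) :
    exp T x = ∑' (k : ℕ), ((Nat.factorial k : ℂ))⁻¹ • (T ^ k) x := by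
  have hs : Summable fun k : ℕ => (Nat.factorial k : ℂ)⁻¹ • T ^ k := expSeries_summable' T
  have := (ContinuousLinearMap.apply ℂ E x).map_tsum hs
  simpa [exp_eq_tsum (𝕂 := ℂ)] using this

/-- If `T x = 0` then `exp T` fixes `x`. -/
theorem exp_clm_fixes_of_apply_eq_zero {T : E →L[ℂ] E} {x : E} (h : T x = 0) :
    exp T x = x := by
  rw [exp_clm_apply]
  have hzero : ∀ k : ℕ, k ≠ 0 → ((Nat.factorial k : ℂ))⁻¹ • (T ^ k) x = 0 := by
    intro k hk
    obtain ⟨j, rfl⟩ := Nat.exists_eq_succ_of_ne_zero hk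
    have : (T ^ (j + 1)) x = (T ^ j) (T x) := by
      rw [pow_succ]; rfl
    rw [this, h, map_zero, smul_zero]
  rw [tsum_eq_single 0 hzero]
  simp

/-- The hard direction: if a nilpotent continuous endomorphism's exponential fixes `x`,
then `T x = 0`. -/
theorem apply_eq_zero_of_exp_clm_fixes {T : E →L[ℂ] E} (hT : IsNilpotent T) {x : E}
    (h : exp T x = x) : T x = 0 := by
  obtain ⟨m₀, hm₀⟩ := hT
  set m := m₀ + 2 with hm
  have hmpow : T ^ m = 0 := by
    rw [hm, pow_add, hm₀, zero_mul]
  -- exp T x as a finite sum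
  have hsum : ∑ j ∈ Finset.range m, ((Nat.factorial j : ℂ))⁻¹ • (T ^ j) x = x := by
    have h1 : exp T x = ∑ j ∈ Finset.range m, ((Nat.factorial j : ℂ))⁻¹ • (T ^ j) x := by
      rw [exp_clm_apply]
      refine tsum_eq_sum fun k hk => ?_
      have hk' : m ≤ k := by simpa using (Finset.mem_range.not.mp hk)
      rw [pow_eq_zero_of_le hk' hmpow]
      simp
    rw [← h1, h]
  -- downward induction
  have main : ∀ d : ℕ, ∀ k : ℕ, 1 ≤ k → m ≤ k + d → (T ^ k) x = 0 := by
    intro d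
    induction d with
    | zero =>
      intro k _ hk
      rw [pow_eq_zero_of_le (by omega : m ≤ k) hmpow]
      simp
    | succ d ih =>
      intro k hk1 hkd
      rcases le_or_gt m (k + d) with hle | hlt
      · exact ih k hk1 hle
      -- all higher powers kill x
      have hhigh : ∀ j : ℕ, k + 1 ≤ j → (T ^ j) x = 0 := by
        intro j hj
        exact ih j (by omega) (by omega)
      obtain ⟨k', rfl⟩ := Nat.exists_eq_add_of_le hk1
      -- apply T ^ k' to hsum
      have happ : ∑ j ∈ Finset.range m, ((Nat.factorial j : ℂ))⁻¹ • (T ^ (k' + j)) x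
          = (T ^ k') x := by
        conv_rhs => rw [← hsum]
        rw [map_sum]
        refine Finset.sum_congr rfl fun j _ => ?_
        rw [(T ^ k').map_smul, pow_add, ContinuousLinearMap.mul_apply]
      have hm2 : 2 ≤ m := by omega
      rw [Finset.range_eq_Ico, Finset.sum_eq_sum_Ico_succ_bot (by omega : 0 < m),
        Finset.sum_eq_sum_Ico_succ_bot (by omega : 1 < m)] at happ
      have hrest : ∑ j ∈ Finset.Ico 2 m, ((Nat.factorial j : ℂ))⁻¹ • (T ^ (k' + j)) x = 0 := by
        refine Finset.sum_eq_zero fun j hj => ?_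
        have : 2 ≤ j := (Finset.mem_Ico.mp hj).1
        rw [hhigh (k' + j) (by omega)]
        simp
      simp only [Nat.factorial_zero, Nat.factorial_one, Nat.cast_one, inv_one, one_smul,
        Nat.add_zero, hrest, add_zero] at happ
      have : (T ^ k') x + (T ^ (k' + 1)) x = (T ^ k') x := by
        simpa [add_comm] using happ
      have h1 : (T ^ (k' + 1)) x = 0 := by
        have := congrArg (fun y => y - (T ^ k') x) this
        simpa using this
      simpa [add_comm] using h1
  have := main m 1 le_rfl (by omega)
  simpa using this

end AuxExp

section AuxMul

open NormedSpace

variable {𝔸 : Type*} [NormedRing 𝔸] [NormedAlgebra ℂ 𝔸] [CompleteSpace 𝔸]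

theorem mulL_pow_apply (N : 𝔸) (k : ℕ) (X : 𝔸) :
    ((ContinuousLinearMap.mul ℂ 𝔸 N) ^ k) X = N ^ k * X := by
  induction k with
  | zero => simp
  | succ k ih =>
    rw [pow_succ']
    calc (ContinuousLinearMap.mul ℂ 𝔸 N * (ContinuousLinearMap.mul ℂ 𝔸 N) ^ k) X
        = N * (((ContinuousLinearMap.mul ℂ 𝔸 N) ^ k) X) := rfl
      _ = N * (N ^ k * X) := by rw [ih]
      _ = N ^ (k + 1) * X := by rw [pow_succ', mul_assoc]

theorem mulR_pow_apply (N : 𝔸) (k : ℕ) (X : 𝔸) :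
    (((ContinuousLinearMap.mul ℂ 𝔸).flip N) ^ k) X = X * N ^ k := by
  induction k with
  | zero => simp
  | succ k ih =>
    rw [pow_succ']
    calc ((ContinuousLinearMap.mul ℂ 𝔸).flip N * ((ContinuousLinearMap.mul ℂ 𝔸).flip N) ^ k) X
        = ((((ContinuousLinearMap.mul ℂ 𝔸).flip N) ^ k) X) * N := rfl
      _ = X * N ^ k * N := by rw [ih]
      _ = X * N ^ (k + 1) := by rw [pow_succ, mul_assoc]

theorem exp_mulL_apply (N X : 𝔸) :
    exp (ContinuousLinearMap.mul ℂ 𝔸 N) X = exp N * X := by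
  rw [exp_clm_apply, exp_eq_tsum (𝕂 := ℂ)]
  simp only [mulL_pow_apply]
  have hs : Summable fun k : ℕ => (Nat.factorial k : ℂ)⁻¹ • N ^ k := expSeries_summable' N
  have h2 := ((ContinuousLinearMap.mul ℂ 𝔸).flip X).map_tsum hs
  simpa only [ContinuousLinearMap.flip_apply, ContinuousLinearMap.mul_apply',
    smul_mul_assoc] using h2.symm

theorem exp_mulR_apply (N X : 𝔸) :
    exp ((ContinuousLinearMap.mul ℂ 𝔸).flip N) X = X * exp N := by
  rw [exp_clm_apply, exp_eq_tsum (𝕂 := ℂ)]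
  simp only [mulR_pow_apply]
  have hs : Summable fun k : ℕ => (Nat.factorial k : ℂ)⁻¹ • N ^ k := expSeries_summable' N
  have h2 := (ContinuousLinearMap.mul ℂ 𝔸 X).map_tsum hs
  simpa only [ContinuousLinearMap.mul_apply', mul_smul_comm] using h2.symm

end AuxMul

/-- A symmetric matrix `A` is fixed by the unipotent element `exp N` (for `N` nilpotent over ℂ)
if and only if `N * A + A * Nᵀ = 0`. -/
theorem unipotent_fixes_iff (n : ℕ) (N A : Matrix (Fin n) (Fin n) ℂ)
    (hN : IsNilpotent N) (hA : A.IsSymm) :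
    NormedSpace.exp N * A * (NormedSpace.exp N)ᵀ = A ↔ N * A + A * Nᵀ = 0 := by
  have hTrans : NormedSpace.exp Nᵀ = (NormedSpace.exp N)ᵀ := Matrix.exp_transpose N
  letI : SeminormedRing (Matrix (Fin n) (Fin n) ℂ) := Matrix.linftyOpSemiNormedRing
  letI : NormedRing (Matrix (Fin n) (Fin n) ℂ) := Matrix.linftyOpNormedRing
  letI : NormedAlgebra ℂ (Matrix (Fin n) (Fin n) ℂ) := Matrix.linftyOpNormedAlgebra
  set L := ContinuousLinearMap.mul ℂ (Matrix (Fin n) (Fin n) ℂ) N with hL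
  set R := (ContinuousLinearMap.mul ℂ (Matrix (Fin n) (Fin n) ℂ)).flip Nᵀ with hR
  have hcomm : Commute L R := by
    refine ContinuousLinearMap.ext fun X => ?_
    simp only [ContinuousLinearMap.mul_apply, hL, hR, ContinuousLinearMap.flip_apply,
      ContinuousLinearMap.mul_apply', mul_assoc]
  obtain ⟨m, hm⟩ := hN
  have hLnil : IsNilpotent L := by
    refine ⟨m, ContinuousLinearMap.ext fun X => ?_⟩
    simp only [hL, mulL_pow_apply, hm, zero_mul, ContinuousLinearMap.zero_apply]
  have hRnil : IsNilpotent R := by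
    refine ⟨m, ContinuousLinearMap.ext fun X => ?_⟩
    simp only [hR, mulR_pow_apply, ← Matrix.transpose_pow, hm, Matrix.transpose_zero, mul_zero,
      ContinuousLinearMap.zero_apply]
  have hnil : IsNilpotent (L + R) := hcomm.isNilpotent_add hLnil hRnil
  have key : NormedSpace.exp N * A * (NormedSpace.exp N)ᵀ = NormedSpace.exp (L + R) A := by
    rw [@NormedSpace.exp_add_of_commute _ _ (NormedAlgebra.restrictScalars ℚ ℂ _) _ _ _ hcomm, ContinuousLinearMap.mul_apply, hL, hR,
      exp_mulR_apply, exp_mulL_apply, mul_assoc]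
    exact congrArg _ (congrArg _ hTrans.symm)
  have hTA : (L + R) A = N * A + A * Nᵀ := by
    simp [hL, hR, ContinuousLinearMap.add_apply]
  constructor
  · intro hfix
    have h0 : NormedSpace.exp (L + R) A = A := key.symm.trans hfix
    have := apply_eq_zero_of_exp_clm_fixes hnil h0
    rwa [hTA] at this
  · intro h0
    have hz : (L + R) A = 0 := hTA.trans h0
    exact key.trans (exp_clm_fixes_of_apply_eq_zero hz)
end

section
/- Let K be a field of characteristic 0 and let N be the n×n nilpotent single Jordan block over K, i.e., the matrix whose (i,j) entry (1-indexed) is 1 if j = i+1 and 0 otherwise. Let m = ⌊(n+1)/2⌋. A symmetric n×n matrix A over K satisfies N·A + A·Nᵀ = 0 if and only if there exist a_1, ..., a_m ∈ K such that for all 1 ≤ i, j ≤ n: the (i,j) entry of A equals (−1)^{i−1}·a_{(i+j)/2} when i+j is even and i+j ≤ n+1, and equals 0 otherwise. -/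
open Matrix

def singleJordan (K : Type*) [Field K] (n : ℕ) : Matrix (Fin n) (Fin n) K :=
  Matrix.of fun i j => if (j : ℕ) = (i : ℕ) + 1 then 1 else 0

private lemma sum_jordan {K : Type*} [Field K] {n : ℕ} (f : Fin n → K) (m : ℕ) :
    ∑ k : Fin n, (if (k : ℕ) = m then (1:K) else 0) * f k
      = if h : m < n then f ⟨m, h⟩ else 0 := by
  split_ifs with h
  · rw [Finset.sum_eq_single (⟨m, h⟩ : Fin n)]
    · rw [if_pos rfl, one_mul]
    · intro k _ hk
      rw [if_neg (fun hkm => hk (Fin.ext hkm)), zero_mul]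
    · simp
  · apply Finset.sum_eq_zero
    intro k _
    rw [if_neg, zero_mul]
    intro hk; exact h (hk ▸ k.isLt)

private lemma entry_eq {K : Type*} [Field K] {n : ℕ} (A : Matrix (Fin n) (Fin n) K)
    (i j : Fin n) :
    (singleJordan K n * A + A * (singleJordan K n)ᵀ) i j
      = (if h : (i:ℕ)+1 < n then A ⟨(i:ℕ)+1, h⟩ j else 0)
        + (if h : (j:ℕ)+1 < n then A i ⟨(j:ℕ)+1, h⟩ else 0) := by
  simp only [Matrix.add_apply, Matrix.mul_apply, Matrix.transpose_apply, singleJordan,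
    Matrix.of_apply]
  congr 1
  · exact sum_jordan (fun k => A k j) ((i:ℕ)+1)
  · rw [← sum_jordan (fun k => A i k) ((j:ℕ)+1)]
    exact Finset.sum_congr rfl fun k _ => mul_comm _ _

/-- A symmetric matrix `A` satisfies `N * A + A * Nᵀ = 0` for the single Jordan block `N`
iff there are scalars `a_1, …, a_m` (here `a : ℕ → K`, 0-indexed, with only indices
`< m = ⌊(n+1)/2⌋` relevant) such that the 1-indexed `(i, j)` entry of `A` equals
`(-1) ^ (i - 1) * a_{(i+j)/2}` when `i + j` is even and `i + j ≤ n + 1`, and `0` otherwise.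
(0-indexed: entry `(i, j)` equals `(-1) ^ i * a ((i+j)/2 + 1)` when `i + j` is even and
`i + j + 1 ≤ n`.) -/
theorem singleJordan_fixed_form (K : Type*) [Field K] [CharZero K] (n : ℕ)
    (A : Matrix (Fin n) (Fin n) K) (hA : A.IsSymm) :
    singleJordan K n * A + A * (singleJordan K n)ᵀ = 0 ↔
      ∃ a : ℕ → K, ∀ i j : Fin n,
        A i j =
          if Even ((i : ℕ) + (j : ℕ)) ∧ (i : ℕ) + (j : ℕ) + 1 ≤ n then
            (-1 : K) ^ (i : ℕ) * a (((i : ℕ) + (j : ℕ)) / 2 + 1)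
          else 0 := by
  classical
  set B : ℕ → ℕ → K := fun i j =>
    if hi : i < n then if hj : j < n then A ⟨i, hi⟩ ⟨j, hj⟩ else 0 else 0 with hBdef
  have hBA : ∀ (i j : Fin n), B i j = A i j := by
    intro i j
    simp [hBdef, i.isLt, j.isLt]
  have hBsymm : ∀ i j, B i j = B j i := by
    intro i j
    by_cases hi : i < n <;> by_cases hj : j < n <;> simp [hBdef, hi, hj]
    exact hA.apply ⟨j, hj⟩ ⟨i, hi⟩
  have hBzero : ∀ i j, n ≤ i ∨ n ≤ j → B i j = 0 := by
    intro i j hij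
    by_cases hi : i < n <;> by_cases hj : j < n <;> simp [hBdef, hi, hj] <;> omega
  constructor
  · intro h
    have hrec : ∀ i j : ℕ, B (i+1) j + B i (j+1) = 0 := by
      intro i j
      by_cases hi : i < n
      · by_cases hj : j < n
        · have hmat := congrFun (congrFun h ⟨i, hi⟩) ⟨j, hj⟩
          rw [entry_eq] at hmat
          simp only [Matrix.zero_apply] at hmat
          have e1 : B (i+1) j = if h : i+1 < n then A ⟨i+1, h⟩ ⟨j, hj⟩ else 0 := by
            simp only [hBdef]
            split_ifs <;> first | rfl | omega
          have e2 : B i (j+1) = if h : j+1 < n then A ⟨i, hi⟩ ⟨j+1, h⟩ else 0 := by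
            simp only [hBdef]
            split_ifs <;> first | rfl | omega
          rw [e1, e2]
          exact hmat
        · rw [hBzero _ _ (Or.inr (not_lt.mp hj)),
            hBzero _ _ (Or.inr (by omega)), add_zero]
      · rw [hBzero _ _ (Or.inl (by omega)), hBzero _ _ (Or.inl (not_lt.mp hi)), add_zero]
    have key : ∀ i j : ℕ, B i j = (-1 : K) ^ i * B 0 (i + j) := by
      intro i
      induction i with
      | zero => intro j; simp
      | succ i ih =>
        intro j
        rw [eq_neg_of_add_eq_zero_left (hrec i j), ih (j+1),
          show i + (j+1) = (i+1) + j from by ring, pow_succ]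
        ring
    have hodd : ∀ s : ℕ, ¬ Even s → B 0 s = 0 := by
      intro s hs
      have h1 : B s 0 = (-1:K)^s * B 0 s := by simpa using key s 0
      rw [Odd.neg_one_pow (Nat.not_even_iff_odd.mp hs)] at h1
      have h3 : (2:K) * B 0 s = 0 := by
        rw [two_mul]
        nth_rewrite 1 [hBsymm 0 s, h1]
        ring
      exact (mul_eq_zero.mp h3).resolve_left two_ne_zero
    refine ⟨fun t => B 0 (2 * (t - 1)), fun i j => ?_⟩
    rw [← hBA, key (i:ℕ) (j:ℕ)]
    split_ifs with hcond
    · obtain ⟨hev, hle⟩ := hcond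
      show (-1:K)^(i:ℕ) * B 0 ((i:ℕ)+(j:ℕ))
          = (-1:K)^(i:ℕ) * B 0 (2 * ((((i:ℕ)+(j:ℕ))/2 + 1) - 1))
      obtain ⟨k, hk⟩ := hev
      rw [show 2 * ((((i:ℕ)+(j:ℕ))/2 + 1) - 1) = (i:ℕ)+(j:ℕ) from by omega]
    · push_neg at hcond
      by_cases hev : Even ((i:ℕ) + (j:ℕ))
      · rw [hBzero 0 _ (Or.inr (by have := hcond hev; omega)), mul_zero]
      · rw [hodd _ hev, mul_zero]
  · rintro ⟨a, ha⟩
    ext i j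
    rw [entry_eq]
    simp only [Matrix.zero_apply]
    by_cases hev : Even ((i:ℕ) + (j:ℕ))
    · have h1 : ∀ (h : (i:ℕ)+1 < n), A ⟨(i:ℕ)+1, h⟩ j = 0 := by
        intro h
        rw [ha ⟨(i:ℕ)+1, h⟩ j, if_neg]
        show ¬(Even (((i:ℕ)+1) + (j:ℕ)) ∧ ((i:ℕ)+1) + (j:ℕ) + 1 ≤ n)
        rintro ⟨he, -⟩
        obtain ⟨k, hk⟩ := hev
        rcases he with ⟨l, hl⟩
        omega
      have h2 : ∀ (h : (j:ℕ)+1 < n), A i ⟨(j:ℕ)+1, h⟩ = 0 := by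
        intro h
        rw [ha i ⟨(j:ℕ)+1, h⟩, if_neg]
        show ¬(Even ((i:ℕ) + ((j:ℕ)+1)) ∧ (i:ℕ) + ((j:ℕ)+1) + 1 ≤ n)
        rintro ⟨he, -⟩
        obtain ⟨k, hk⟩ := hev
        rcases he with ⟨l, hl⟩
        omega
      split_ifs with hh1 hh2 hh2
      · rw [h1 hh1, h2 hh2, add_zero]
      · rw [h1 hh1, add_zero]
      · rw [h2 hh2, zero_add]
      · rw [add_zero]
    · by_cases hle : (i:ℕ) + (j:ℕ) + 2 ≤ n
      · have hi1 : (i:ℕ) + 1 < n := by omega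
        have hj1 : (j:ℕ) + 1 < n := by omega
        have hev1 : Even (((i:ℕ)+1) + (j:ℕ)) := by
          rcases Nat.even_or_odd ((i:ℕ)+(j:ℕ)) with he | ho
          · exact absurd he hev
          · rcases ho with ⟨l, hl⟩; exact ⟨l+1, by omega⟩
        have hev2 : Even ((i:ℕ) + ((j:ℕ)+1)) := by
          rcases hev1 with ⟨l, hl⟩; exact ⟨l, by omega⟩
        rw [dif_pos hi1, dif_pos hj1, ha ⟨(i:ℕ)+1, hi1⟩ j, ha i ⟨(j:ℕ)+1, hj1⟩,
          if_pos ⟨hev1, (by omega : ((i:ℕ)+1) + (j:ℕ) + 1 ≤ n)⟩,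
          if_pos ⟨hev2, (by omega : (i:ℕ) + ((j:ℕ)+1) + 1 ≤ n)⟩,
          show ((i:ℕ)+1+(j:ℕ))/2 = ((i:ℕ)+((j:ℕ)+1))/2 from by omega, pow_succ]
        ring
      · have h1 : ∀ (h : (i:ℕ)+1 < n), A ⟨(i:ℕ)+1, h⟩ j = 0 := by
          intro h
          rw [ha ⟨(i:ℕ)+1, h⟩ j, if_neg]
          show ¬(Even (((i:ℕ)+1) + (j:ℕ)) ∧ ((i:ℕ)+1) + (j:ℕ) + 1 ≤ n)
          rintro ⟨-, hle'⟩
          omega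
        have h2 : ∀ (h : (j:ℕ)+1 < n), A i ⟨(j:ℕ)+1, h⟩ = 0 := by
          intro h
          rw [ha i ⟨(j:ℕ)+1, h⟩, if_neg]
          show ¬(Even ((i:ℕ) + ((j:ℕ)+1)) ∧ (i:ℕ) + ((j:ℕ)+1) + 1 ≤ n)
          rintro ⟨-, hle'⟩
          omega
        split_ifs with hh1 hh2 hh2
        · rw [h1 hh1, h2 hh2, add_zero]
        · rw [h1 hh1, add_zero]
        · rw [h2 hh2, zero_add]
        · rw [add_zero]
end

section
/- Let K be a field of characteristic 0 and let N be the n×n nilpotent single Jordan block over K, i.e., the matrix whose (i,j) entry (1-indexed) is 1 if j = i+1 and 0 otherwise. Then the K-vector space {A : A is a symmetric n×n matrix over K and N·A + A·Nᵀ = 0} has dimension ⌊(n+1)/2⌋. -/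
open Matrix

/-- The subspace of symmetric matrices `A` with `N * A + A * Nᵀ = 0`. -/
def fixedSymm (K : Type*) [Field K] {n : ℕ} (N : Matrix (Fin n) (Fin n) K) :
    Submodule K (Matrix (Fin n) (Fin n) K) where
  carrier := {A | A.IsSymm ∧ N * A + A * Nᵀ = 0}
  add_mem' := by
    rintro a b ⟨ha1, ha2⟩ ⟨hb1, hb2⟩
    exact ⟨ha1.add hb1, by
      rw [Matrix.mul_add, Matrix.add_mul, add_add_add_comm, ha2, hb2, add_zero]⟩
  zero_mem' := ⟨Matrix.isSymm_zero, by simp⟩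
  smul_mem' := by
    rintro c a ⟨ha1, ha2⟩
    exact ⟨ha1.smul c, by
      rw [Matrix.mul_smul, Matrix.smul_mul, ← smul_add, ha2, smul_zero]⟩

section Aux

variable {K : Type*} [Field K] {n : ℕ}

lemma sumIte (f : Fin n → K) (m : ℕ) :
    ∑ k : Fin n, (if (k : ℕ) = m then f k else 0) = if h : m < n then f ⟨m, h⟩ else 0 := by
  split_ifs with h
  · rw [Finset.sum_eq_single (⟨m, h⟩ : Fin n)]
    · simp
    · intro k _ hk
      rw [if_neg]
      exact fun hkm => hk (Fin.ext hkm)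
    · simp
  · apply Finset.sum_eq_zero
    intro k _
    rw [if_neg]
    have := k.2
    omega

lemma negOnePow_congr {i j : ℕ} (h : i % 2 = j % 2) : ((-1 : K)) ^ i = (-1) ^ j := by
  conv_lhs => rw [← Nat.div_add_mod i 2]
  conv_rhs => rw [← Nat.div_add_mod j 2]
  rw [pow_add, pow_add, pow_mul, pow_mul, h]
  norm_num

/-- the matrix built from coordinates -/
def jmat (K : Type*) [Field K] (n : ℕ) (c : Fin ((n + 1) / 2) → K) : Matrix (Fin n) (Fin n) K :=
  Matrix.of fun i j =>
    if h : (i : ℕ) + (j : ℕ) < n ∧ ((i : ℕ) + (j : ℕ)) % 2 = 0 then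
      (-1 : K) ^ (i : ℕ) * c ⟨((i : ℕ) + (j : ℕ)) / 2, by omega⟩ else 0

lemma entryEq {N : Matrix (Fin n) (Fin n) K} (hN : N = singleJordan K n)
    {A : Matrix (Fin n) (Fin n) K} (he : N * A + A * Nᵀ = 0) (i j : Fin n) :
    (if h : (i : ℕ) + 1 < n then A ⟨(i : ℕ) + 1, h⟩ j else 0) +
      (if h : (j : ℕ) + 1 < n then A i ⟨(j : ℕ) + 1, h⟩ else 0) = 0 := by
  subst hN
  have h0 : (singleJordan K n * A + A * (singleJordan K n)ᵀ) i j = (0 : Matrix (Fin n) (Fin n) K) i j := by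
    rw [he]
  simp only [Matrix.add_apply, Matrix.mul_apply, Matrix.zero_apply, Matrix.transpose_apply,
    singleJordan, Matrix.of_apply, ite_mul, one_mul, zero_mul, mul_ite, mul_one, mul_zero] at h0
  rwa [sumIte (fun k => A k j), sumIte (fun k => A i k)] at h0

lemma jmat_mem (c : Fin ((n + 1) / 2) → K) :
    jmat K n c ∈ fixedSymm K (singleJordan K n) := by
  constructor
  · -- symmetric
    ext i j
    simp only [Matrix.transpose_apply, jmat, Matrix.of_apply]
    by_cases h : (i : ℕ) + (j : ℕ) < n ∧ ((i : ℕ) + (j : ℕ)) % 2 = 0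
    · rw [dif_pos (by omega : (j:ℕ) + (i:ℕ) < n ∧ ((j:ℕ) + (i:ℕ)) % 2 = 0), dif_pos h]
      have h1 : (-1 : K) ^ (j : ℕ) = (-1) ^ (i : ℕ) := negOnePow_congr (by omega)
      have h2 : (⟨((j:ℕ) + (i:ℕ)) / 2, by omega⟩ : Fin ((n+1)/2)) =
          ⟨((i:ℕ) + (j:ℕ)) / 2, by omega⟩ :=
        Fin.ext (show ((j:ℕ) + (i:ℕ)) / 2 = ((i:ℕ) + (j:ℕ)) / 2 by omega)
      rw [h1]
      exact congrArg (fun x => (-1 : K) ^ (i:ℕ) * c x) h2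
    · rw [dif_neg (by omega), dif_neg h]
  · -- equation
    ext i j
    have key : (if h : (i : ℕ) + 1 < n then jmat K n c ⟨(i : ℕ) + 1, h⟩ j else 0) +
        (if h : (j : ℕ) + 1 < n then jmat K n c i ⟨(j : ℕ) + 1, h⟩ else 0) = 0 := by
      by_cases hi : (i : ℕ) + 1 < n
      · by_cases hj : (j : ℕ) + 1 < n
        · rw [dif_pos hi, dif_pos hj]
          simp only [jmat, Matrix.of_apply]
          by_cases h : (i : ℕ) + 1 + (j : ℕ) < n ∧ ((i : ℕ) + 1 + (j : ℕ)) % 2 = 0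
          · rw [dif_pos h, dif_pos (by omega : (i:ℕ) + ((j:ℕ)+1) < n ∧ ((i:ℕ) + ((j:ℕ)+1)) % 2 = 0)]
            have hc : (⟨((i:ℕ) + 1 + (j:ℕ)) / 2, by omega⟩ : Fin ((n+1)/2)) =
                ⟨((i:ℕ) + ((j:ℕ)+1)) / 2, by omega⟩ :=
              Fin.ext (show ((i:ℕ) + 1 + (j:ℕ)) / 2 = ((i:ℕ) + ((j:ℕ)+1)) / 2 by omega)
            rw [hc, pow_succ]
            ring
          · rw [dif_neg h, dif_neg (by omega)]
            simp
        · have hj' : (j : ℕ) = n - 1 := by have := j.2; omega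
          rw [dif_pos hi, dif_neg hj]
          simp only [jmat, Matrix.of_apply]
          rw [dif_neg (by omega)]
          simp
      · have hi' : (i : ℕ) = n - 1 := by have := i.2; omega
        rw [dif_neg hi]
        by_cases hj : (j : ℕ) + 1 < n
        · rw [dif_pos hj]
          simp only [jmat, Matrix.of_apply]
          rw [dif_neg (by have := i.2; omega)]
          simp
        · rw [dif_neg hj]; simp
    have h1 : (singleJordan K n * jmat K n c) i j = if h : (i : ℕ) + 1 < n then jmat K n c ⟨(i : ℕ) + 1, h⟩ j else 0 := by
      simp only [Matrix.mul_apply, singleJordan, Matrix.of_apply, ite_mul, one_mul, zero_mul]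
      exact sumIte (fun k => jmat K n c k j) _
    have h2 : (jmat K n c * (singleJordan K n)ᵀ) i j = if h : (j : ℕ) + 1 < n then jmat K n c i ⟨(j : ℕ) + 1, h⟩ else 0 := by
      simp only [Matrix.mul_apply, Matrix.transpose_apply, singleJordan, Matrix.of_apply,
        mul_ite, mul_one, mul_zero]
      exact sumIte (fun k => jmat K n c i k) _
    simp only [Matrix.add_apply, Matrix.zero_apply, h1, h2]
    exact key

variable [CharZero K]

lemma structure_thm {A : Matrix (Fin n) (Fin n) K} (hs : A.IsSymm)
    (he : singleJordan K n * A + A * (singleJordan K n)ᵀ = 0) :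
    ∀ (i j : Fin n), A i j =
      if h : (i : ℕ) + (j : ℕ) < n ∧ ((i : ℕ) + (j : ℕ)) % 2 = 0 then
        (-1 : K) ^ (i : ℕ) * A ⟨0, by omega⟩ ⟨(i : ℕ) + (j : ℕ), h.1⟩ else 0 := by
  -- abbreviation c
  set c : ℕ → K := fun s => if h : s < n then A ⟨0, by omega⟩ ⟨s, h⟩ else 0 with hc
  have E := entryEq rfl he
  -- L1
  have L1 : ∀ (i : ℕ) (hi : i < n) (j : Fin n), A ⟨i, hi⟩ j = (-1 : K) ^ i * c (i + (j : ℕ)) := by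
    intro i
    induction i with
    | zero =>
      intro hi j
      simp only [hc, pow_zero, one_mul, Nat.zero_add]
      rw [dif_pos j.2]
    | succ i ih =>
      intro hi j
      have hE := E ⟨i, by omega⟩ j
      simp only [Fin.val_mk] at hE
      rw [dif_pos hi] at hE
      by_cases hj : (j : ℕ) + 1 < n
      · rw [dif_pos hj, ih (by omega) ⟨(j : ℕ) + 1, hj⟩] at hE
        simp only [Fin.val_mk] at hE
        calc A ⟨i + 1, hi⟩ j = -((-1 : K) ^ i * c (i + ((j : ℕ) + 1))) :=
              eq_neg_of_add_eq_zero_left hE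
          _ = (-1 : K) ^ (i + 1) * c ((i + 1) + (j : ℕ)) := by
              rw [show i + ((j : ℕ) + 1) = (i + 1) + (j : ℕ) by omega, pow_succ]
              ring
      · rw [dif_neg hj, add_zero] at hE
        have hz : c ((i + 1) + (j : ℕ)) = 0 := dif_neg (by have := j.2; omega)
        rw [hz, mul_zero]
        exact hE
  have L1' : ∀ (i j : Fin n), A i j = (-1 : K) ^ (i : ℕ) * c ((i : ℕ) + (j : ℕ)) := by
    intro i j
    have := L1 i i.2 j
    simpa using this
  -- L2 : odd vanishes
  have L2 : ∀ s : ℕ, s % 2 = 1 → c s = 0 := by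
    intro s hodd
    by_cases hsn : s < n
    · obtain ⟨t, ht⟩ : ∃ t, s = 2 * t + 1 := ⟨s / 2, by omega⟩
      have h1 : A ⟨t, by omega⟩ ⟨t + 1, by omega⟩ = (-1 : K) ^ t * c s := by
        have := L1' ⟨t, by omega⟩ ⟨t + 1, by omega⟩
        simp only [Fin.val_mk] at this
        rw [this, show t + (t + 1) = s by omega]
      have h2 : A ⟨t + 1, by omega⟩ ⟨t, by omega⟩ = (-1 : K) ^ (t + 1) * c s := by
        have := L1' ⟨t + 1, by omega⟩ ⟨t, by omega⟩
        simp only [Fin.val_mk] at this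
        rw [this, show t + 1 + t = s by omega]
      have hsym : A ⟨t + 1, by omega⟩ ⟨t, by omega⟩ = A ⟨t, by omega⟩ ⟨t + 1, by omega⟩ :=
        hs.apply _ _
      rw [h1, h2, pow_succ] at hsym
      have h4 : (-1 : K) ^ t * c s = 0 := by
        linear_combination (-1 / 2 : K) * hsym
      rcases mul_eq_zero.mp h4 with h | h
      · exact absurd h (pow_ne_zero _ (by norm_num))
      · exact h
    · simp only [hc]
      rw [dif_neg hsn]
  intro i j
  rw [L1' i j]
  by_cases h : (i : ℕ) + (j : ℕ) < n ∧ ((i : ℕ) + (j : ℕ)) % 2 = 0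
  · rw [dif_pos h]
    congr 1
    simp only [hc]
    rw [dif_pos h.1]
  · rw [dif_neg h]
    by_cases h1 : (i : ℕ) + (j : ℕ) < n
    · rw [L2 _ (by omega)]
      ring
    · simp only [hc]
      rw [dif_neg h1]
      ring

end Aux

/-- The space of symmetric matrices fixed (infinitesimally) by a regular nilpotent Jordan
block has dimension `⌊(n+1)/2⌋`. -/
theorem singleJordan_fixed_dim (K : Type*) [Field K] [CharZero K] (n : ℕ) :
    Module.finrank K (fixedSymm K (singleJordan K n)) = (n + 1) / 2 := by
  have e : fixedSymm K (singleJordan K n) ≃ₗ[K] (Fin ((n + 1) / 2) → K) :=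
    { toFun := fun A t => A.1 ⟨0, by have := t.2; omega⟩ ⟨2 * (t : ℕ), by have := t.2; omega⟩
      map_add' := fun A B => rfl
      map_smul' := fun r A => rfl
      invFun := fun c => ⟨jmat K n c, jmat_mem c⟩
      left_inv := by
        rintro ⟨A, hA⟩
        obtain ⟨hs, heq⟩ := hA
        apply Subtype.ext
        ext i j
        simp only [jmat, Matrix.of_apply]
        rw [structure_thm hs heq i j]
        by_cases h : (i : ℕ) + (j : ℕ) < n ∧ ((i : ℕ) + (j : ℕ)) % 2 = 0
        · rw [dif_pos h, dif_pos h]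
          have hfin : (⟨2 * (((i : ℕ) + (j : ℕ)) / 2), by omega⟩ : Fin n) =
              ⟨(i : ℕ) + (j : ℕ), h.1⟩ :=
            Fin.ext (show 2 * (((i : ℕ) + (j : ℕ)) / 2) = (i : ℕ) + (j : ℕ) by omega)
          exact congrArg (fun x => (-1 : K) ^ (i : ℕ) * A ⟨0, by omega⟩ x) hfin
        · rw [dif_neg h, dif_neg h]
      right_inv := by
        intro c
        funext t
        simp only [jmat, Matrix.of_apply]
        rw [dif_pos (by have := t.2; omega : (0 : ℕ) + 2 * (t : ℕ) < n ∧ ((0 : ℕ) + 2 * (t : ℕ)) % 2 = 0)]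
        simp only [pow_zero, one_mul]
        congr 1
        simp only [Fin.ext_iff]
        omega }
  rw [e.finrank_eq, Module.finrank_fin_fun]
end

section
/- Let K be a field of characteristic 0, let n be odd, and let N be the n×n nilpotent single Jordan block over K, i.e., the matrix whose (i,j) entry (1-indexed) is 1 if j = i+1 and 0 otherwise. Then for every symmetric n×n matrix A over K satisfying N·A + A·Nᵀ = 0, one has det(A) ≠ 0 if and only if the (1,n) entry of A is nonzero. -/
open Matrix

lemma sum_shift_aux {K : Type*} [Field K] {n : ℕ} (f : Fin n → K) (m : ℕ) :
    (∑ k : Fin n, (if (k : ℕ) = m then (1 : K) else 0) * f k)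
      = if h : m < n then f ⟨m, h⟩ else 0 := by
  split_ifs with h
  · rw [Finset.sum_eq_single (⟨m, h⟩ : Fin n)]
    · simp
    · intro b _ hb
      have : (b : ℕ) ≠ m := by
        intro hbm; exact hb (Fin.ext hbm)
      simp [this]
    · simp
  · apply Finset.sum_eq_zero
    intro k _
    have : (k : ℕ) ≠ m := fun hk => h (hk ▸ k.isLt)
    simp [this]

/-- When `n` is odd, a symmetric matrix fixed by the regular unipotent element is
nondegenerate iff its `(1, n)` entry (1-indexed) is nonzero. -/
theorem singleJordan_odd_det_ne_zero_iff (K : Type*) [Field K] [CharZero K] (n : ℕ)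
    (hn : Odd n) (A : Matrix (Fin n) (Fin n) K) (hA : A.IsSymm)
    (hfix : singleJordan K n * A + A * (singleJordan K n)ᵀ = 0) :
    A.det ≠ 0 ↔ A ⟨0, hn.pos⟩ ⟨n - 1, Nat.sub_lt hn.pos Nat.one_pos⟩ ≠ 0 := by
  have hpos : 0 < n := hn.pos
  -- the entrywise recurrence
  have hrec : ∀ i j : Fin n,
      (if h : (i : ℕ) + 1 < n then A ⟨(i : ℕ) + 1, h⟩ j else 0)
      + (if h : (j : ℕ) + 1 < n then A i ⟨(j : ℕ) + 1, h⟩ else 0) = 0 := by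
    intro i j
    have h0 := congrFun (congrFun hfix i) j
    simp only [Matrix.add_apply, Matrix.mul_apply, Matrix.transpose_apply,
      singleJordan, Matrix.of_apply, Matrix.zero_apply] at h0
    rw [sum_shift_aux (fun k => A k j) ((i : ℕ) + 1)] at h0
    have h1 : (∑ k : Fin n, A i k * if (k : ℕ) = (j : ℕ) + 1 then (1:K) else 0)
        = if h : (j : ℕ) + 1 < n then A i ⟨(j : ℕ) + 1, h⟩ else 0 := by
      rw [← sum_shift_aux (fun k => A i k) ((j : ℕ) + 1)]
      exact Finset.sum_congr rfl fun k _ => by ring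
    rw [h1] at h0
    exact h0
  -- nat-indexed recurrence
  have hrecN : ∀ (i j : ℕ) (hi1 : i + 1 < n) (hj : j < n),
      A ⟨i + 1, hi1⟩ ⟨j, hj⟩
        + (if h : j + 1 < n then A ⟨i, Nat.lt_of_succ_lt hi1⟩ ⟨j + 1, h⟩ else 0) = 0 := by
    intro i j hi1 hj
    have h := hrec ⟨i, Nat.lt_of_succ_lt hi1⟩ ⟨j, hj⟩
    rw [dif_pos (show i + 1 < n from hi1)] at h
    exact h
  -- entries strictly below the antidiagonal vanish
  have hzeroN : ∀ m : ℕ, ∀ (i j : ℕ) (hi : i < n) (hj : j < n),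
      n - 1 - j ≤ m → n ≤ i + j → A ⟨i, hi⟩ ⟨j, hj⟩ = 0 := by
    intro m
    induction m with
    | zero =>
      intro i j hi hj hjm hsum
      obtain ⟨i', rfl⟩ : ∃ i', i = i' + 1 := ⟨i - 1, by omega⟩
      have h := hrecN i' j hi hj
      rw [dif_neg (by omega)] at h
      simpa using h
    | succ m ih =>
      intro i j hi hj hjm hsum
      by_cases hjn : j + 1 < n
      · obtain ⟨i', rfl⟩ : ∃ i', i = i' + 1 := ⟨i - 1, by omega⟩
        have h := hrecN i' j hi hj
        rw [dif_pos hjn] at h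
        have h2 : A ⟨i', Nat.lt_of_succ_lt hi⟩ ⟨j + 1, hjn⟩ = 0 :=
          ih i' (j + 1) (Nat.lt_of_succ_lt hi) hjn (by omega) (by omega)
        rw [h2] at h
        simpa using h
      · exact ih i j hi hj (by omega) hsum
  have hzero' : ∀ i j : Fin n, n ≤ (i : ℕ) + (j : ℕ) → A i j = 0 := by
    intro i j h
    exact hzeroN (n - 1 - (j : ℕ)) i j i.isLt j.isLt le_rfl h
  -- explicit formula in terms of the first row
  have hformN : ∀ m : ℕ, ∀ (hm : m < n) (j : ℕ) (hj : j < n),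
      A ⟨m, hm⟩ ⟨j, hj⟩ = (-1 : K) ^ m *
        (if h : m + j < n then A ⟨0, hpos⟩ ⟨m + j, h⟩ else 0) := by
    intro m
    induction m with
    | zero =>
      intro hm j hj
      rw [dif_pos (show 0 + j < n by omega)]
      rw [show (⟨0 + j, show 0 + j < n by omega⟩ : Fin n) = ⟨j, hj⟩ from
        Fin.ext (show 0 + j = j by omega)]
      ring
    | succ m ih =>
      intro hm j hj
      by_cases hjn : j + 1 < n
      · have h := hrecN m j hm hj
        rw [dif_pos hjn] at h
        have h2 := ih (Nat.lt_of_succ_lt hm) (j + 1) hjn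
        rw [h2] at h
        have hAeq : A ⟨m + 1, hm⟩ ⟨j, hj⟩
            = -((-1 : K) ^ m *
              (if h : m + (j + 1) < n then A ⟨0, hpos⟩ ⟨m + (j + 1), h⟩ else 0)) :=
          eq_neg_of_add_eq_zero_left h
        rw [hAeq]
        by_cases hlt : m + 1 + j < n
        · rw [dif_pos (show m + (j + 1) < n by omega), dif_pos hlt]
          rw [show (⟨m + (j + 1), show m + (j + 1) < n by omega⟩ : Fin n)
            = ⟨m + 1 + j, hlt⟩ from Fin.ext (show m + (j + 1) = m + 1 + j by omega)]
          ring
        · rw [dif_neg (by omega), dif_neg hlt]; ring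
      · have hz : A ⟨m + 1, hm⟩ ⟨j, hj⟩ = 0 :=
          hzeroN (n - 1 - j) (m + 1) j hm hj le_rfl (by omega)
        rw [hz, dif_neg (by omega)]
        ring
  set a : K := A ⟨0, hpos⟩ ⟨n - 1, Nat.sub_lt hpos Nat.one_pos⟩ with ha
  -- reversed matrix
  set B : Matrix (Fin n) (Fin n) K := A.submatrix (Fin.revPerm : Equiv.Perm (Fin n)) id
    with hB
  have hBdet : B.det = ((Equiv.Perm.sign (Fin.revPerm : Equiv.Perm (Fin n)) : ℤ) : K) * A.det :=
    Matrix.det_permute _ _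
  have hBtri : B.BlockTriangular (OrderDual.toDual : Fin n → (Fin n)ᵒᵈ) := by
    intro i j hij
    have hij' : (i : ℕ) < (j : ℕ) := hij
    apply hzero'
    simp only [Fin.revPerm_apply, Fin.val_rev, id_eq]
    have := i.isLt
    have := j.isLt
    omega
  have hBdiag : ∀ i : Fin n, B i i = (-1 : K) ^ (n - 1 - (i : ℕ)) * a := by
    intro i
    have hlt : n - 1 - (i : ℕ) < n := by have := i.isLt; omega
    have hBeq : B i i = A ⟨n - 1 - (i : ℕ), hlt⟩ ⟨(i : ℕ), i.isLt⟩ := by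
      simp only [hB, Matrix.submatrix_apply, id_eq, Fin.revPerm_apply]
      congr 1
      · exact Fin.ext (by simp only [Fin.val_rev, Fin.val_mk]; omega)
    rw [hBeq, hformN (n - 1 - (i : ℕ)) hlt (i : ℕ) i.isLt]
    rw [dif_pos (show n - 1 - (i : ℕ) + (i : ℕ) < n by have := i.isLt; omega)]
    rw [show (⟨n - 1 - (i : ℕ) + (i : ℕ), show n - 1 - (i : ℕ) + (i : ℕ) < n by
        have := i.isLt; omega⟩ : Fin n)
      = ⟨n - 1, Nat.sub_lt hpos Nat.one_pos⟩ from
        Fin.ext (show n - 1 - (i : ℕ) + (i : ℕ) = n - 1 by have := i.isLt; omega)]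
  have hBdet2 : B.det = ∏ i : Fin n, B i i := Matrix.det_of_lowerTriangular B hBtri
  have hkey : B.det ≠ 0 ↔ a ≠ 0 := by
    rw [hBdet2, Finset.prod_ne_zero_iff]
    constructor
    · intro h
      have h0 := h ⟨0, hpos⟩ (Finset.mem_univ _)
      rw [hBdiag] at h0
      intro ha0
      rw [ha0, mul_zero] at h0
      exact h0 rfl
    · intro ha0 i _
      rw [hBdiag]
      exact mul_ne_zero (pow_ne_zero _ (by norm_num)) ha0
  have hsign : ((Equiv.Perm.sign (Fin.revPerm : Equiv.Perm (Fin n)) : ℤ) : K) ≠ 0 := by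
    rcases Int.units_eq_one_or (Equiv.Perm.sign (Fin.revPerm : Equiv.Perm (Fin n))) with h | h
      <;> rw [h] <;> norm_num
  rw [← hkey, hBdet]
  constructor
  · intro h
    exact mul_ne_zero hsign h
  · intro h hc
    exact h (by rw [hc, mul_zero])
end

section
/- The K-vector space S^λ = {A : A is a symmetric n×n matrix over K and N_λ·A + A·N_λᵀ = 0} has dimension Σ_{i=1}^{k} ⌊(λ_i + 1)/2⌋ + Σ_{i=1}^{k} (i−1)·λ_i. Equivalently, the projectivization of S^λ is a projective space of dimension Σ_{i=1}^{k} ⌊(λ_i + 1)/2⌋ + Σ_{i=1}^{k} (i−1)·λ_i − 1. -/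
open Matrix

/-- Partial sum `s_r = λ_1 + ⋯ + λ_{r-1}` (where the parts are `lam 0, lam 1, …`). -/
def psum {k : ℕ} (lam : Fin k → ℕ) (r : Fin k) : ℕ :=
  ∑ t ∈ Finset.univ.filter (fun t => t < r), lam t

/-- The `n × n` nilpotent Jordan matrix of type `λ`: its 1-indexed `(i, j)` entry is `1`
if `j = i + 1` and `s_r < i < i + 1 ≤ s_r + λ_r` for some `r`, and `0` otherwise
(here written with 0-indexed `i`, `j`). -/
def jordanNilpotent (K : Type*) [Field K] (n k : ℕ) (lam : Fin k → ℕ) :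
    Matrix (Fin n) (Fin n) K :=
  Matrix.of fun i j =>
    if (j : ℕ) = (i : ℕ) + 1 ∧
        ∃ r : Fin k, psum lam r ≤ (i : ℕ) ∧ (i : ℕ) + 2 ≤ psum lam r + lam r
      then 1 else 0

theorem psum_add_lt {n k : ℕ} (lam : Fin k → ℕ) (hn : ∑ r, lam r = n) (r : Fin k)
    (p : ℕ) (hp : p < lam r) : psum lam r + p < n := by
  have h1 : lam r + psum lam r ≤ ∑ t, lam t := by
    rw [psum, ← Finset.sum_insert (by simp)]
    exact Finset.sum_le_sum_of_subset (Finset.subset_univ _)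
  omega

/-- The index in `Fin n` of the `p`-th position (0-indexed) of the `r`-th block. -/
def blockIdx {n k : ℕ} (lam : Fin k → ℕ) (hn : ∑ r, lam r = n) (r : Fin k) (p : ℕ)
    (hp : p < lam r) : Fin n :=
  ⟨psum lam r + p, psum_add_lt lam hn r p hp⟩

namespace JordanDim

variable {k : ℕ} (lam : Fin k → ℕ)

lemma psum_le {r s : Fin k} (h : r < s) : psum lam r + lam r ≤ psum lam s := by
  rw [psum, psum, add_comm, ← Finset.sum_insert (by simp)]
  apply Finset.sum_le_sum_of_subset
  intro t ht
  simp only [Finset.mem_insert, Finset.mem_filter, Finset.mem_univ, true_and] at ht ⊢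
  rcases ht with h1 | h1
  · exact h1 ▸ h
  · exact h1.trans h

lemma psum_inj {r s : Fin k} {p q : ℕ} (hp : p < lam r) (hq : q < lam s)
    (h : psum lam r + p = psum lam s + q) : r = s ∧ p = q := by
  rcases lt_trichotomy r s with h1 | h1 | h1
  · have := psum_le lam h1; omega
  · exact ⟨h1, by rw [h1] at h; omega⟩
  · have := psum_le lam h1; omega

section Block
variable {n : ℕ} (hn : ∑ r, lam r = n)

/-- The blocks index type. -/
abbrev I (lam : Fin k → ℕ) := Σ r : Fin k, Fin (lam r)

def toFin : I lam → Fin n := fun x => ⟨psum lam x.1 + x.2, psum_add_lt lam hn x.1 x.2 x.2.2⟩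

lemma toFin_inj : Function.Injective (toFin lam hn) := by
  rintro ⟨r, p⟩ ⟨s, q⟩ h
  simp only [toFin, Fin.mk.injEq] at h
  obtain ⟨h1, h2⟩ := psum_inj lam p.2 q.2 h
  subst h1
  simp [Fin.ext_iff, h2]

noncomputable def blockEquiv : I lam ≃ Fin n :=
  Equiv.ofBijective _ ((Fintype.bijective_iff_injective_and_card (toFin lam hn)).mpr
    ⟨toFin_inj lam hn, by simp [hn]⟩)

lemma blockEquiv_apply (x : I lam) :
    ((blockEquiv lam hn x : Fin n) : ℕ) = psum lam x.1 + x.2 := rfl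

/-- The Jordan matrix in block-index form. -/
def Jmat (K : Type*) [Field K] : Matrix (I lam) (I lam) K :=
  Matrix.of fun i j => if i.1 = j.1 ∧ (j.2 : ℕ) = (i.2 : ℕ) + 1 then 1 else 0

lemma jordan_eq_reindex (K : Type*) [Field K] :
    jordanNilpotent K n k lam = (Matrix.reindex (blockEquiv lam hn) (blockEquiv lam hn))
      (Jmat lam K) := by
  ext i j
  rw [Matrix.reindex_apply, Matrix.submatrix_apply]
  rw [← (blockEquiv lam hn).apply_symm_apply i, ← (blockEquiv lam hn).apply_symm_apply j]
  obtain ⟨r, p⟩ := (blockEquiv lam hn).symm i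
  obtain ⟨s, q⟩ := (blockEquiv lam hn).symm j
  simp only [Equiv.symm_apply_apply]
  show (if _ then (1:K) else 0) = (if _ then (1:K) else 0)
  simp only [blockEquiv_apply]
  congr 1
  simp only [eq_iff_iff]
  constructor
  · rintro ⟨h1, r', hr1, hr2⟩
    -- decomposition uniqueness
    have hp2 : (p : ℕ) + 2 ≤ lam r := by
      have hlt : psum lam r + (p : ℕ) < psum lam r' + lam r' := by omega
      have h3 : psum lam r + (p:ℕ) = psum lam r' + (psum lam r + (p:ℕ) - psum lam r') := by omega
      obtain ⟨he, hpe⟩ := psum_inj lam p.2 (by omega) h3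
      subst he
      omega
    have h4 : psum lam s + (q : ℕ) = psum lam r + ((p:ℕ)+1) := by omega
    obtain ⟨he, hqe⟩ := psum_inj lam q.2 (by omega) h4
    subst he
    exact ⟨rfl, hqe⟩
  · rintro ⟨h1, h2⟩
    subst h1
    refine ⟨by omega, r, by omega, by have := q.2; omega⟩

end Block

variable {K : Type*} [Field K]

/-- entry with out-of-range convention 0 -/
def ent (A : Matrix (I lam) (I lam) K) (r s : Fin k) (p q : ℕ) : K :=
  if h : p < lam r ∧ q < lam s then A ⟨r, ⟨p, h.1⟩⟩ ⟨s, ⟨q, h.2⟩⟩ else 0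

lemma ent_eq (A : Matrix (I lam) (I lam) K) {r s : Fin k} {p q : ℕ}
    (hp : p < lam r) (hq : q < lam s) :
    ent lam A r s p q = A ⟨r, ⟨p, hp⟩⟩ ⟨s, ⟨q, hq⟩⟩ := dif_pos ⟨hp, hq⟩

lemma ent_symm {A : Matrix (I lam) (I lam) K} (hs : A.IsSymm) (r s : Fin k) (p q : ℕ) :
    ent lam A s r q p = ent lam A r s p q := by
  unfold ent
  split_ifs with h1 h2 h2
  · exact hs.apply _ _
  · exact absurd ⟨h1.2, h1.1⟩ h2
  · exact absurd ⟨h2.2, h2.1⟩ h1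
  · rfl

lemma Jmat_mul (A : Matrix (I lam) (I lam) K) (i j : I lam) :
    (Jmat lam K * A) i j = ent lam A i.1 j.1 ((i.2 : ℕ) + 1) (j.2 : ℕ) := by
  rw [Matrix.mul_apply]
  by_cases h : (i.2 : ℕ) + 1 < lam i.1
  · rw [ent_eq lam A h j.2.2, Finset.sum_eq_single (⟨i.1, ⟨(i.2 : ℕ) + 1, h⟩⟩ : I lam)]
    · simp [Jmat]
    · rintro ⟨s, q⟩ - hne
      have hc : ¬(i.1 = s ∧ (q : ℕ) = (i.2 : ℕ) + 1) := by
        rintro ⟨h1, h2⟩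
        subst h1
        exact hne (congrArg (Sigma.mk i.1) (Fin.ext h2))
      simp [Jmat, hc]
    · simp
  · rw [ent, dif_neg (fun hc => h hc.1)]
    apply Finset.sum_eq_zero
    rintro ⟨s, q⟩ -
    have hc : ¬(i.1 = s ∧ (q : ℕ) = (i.2 : ℕ) + 1) := by
      rintro ⟨h1, h2⟩
      subst h1
      exact h (h2 ▸ q.2)
    simp [Jmat, hc]

lemma mul_JmatT (A : Matrix (I lam) (I lam) K) (i j : I lam) :
    (A * (Jmat lam K)ᵀ) i j = ent lam A i.1 j.1 (i.2 : ℕ) ((j.2 : ℕ) + 1) := by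
  rw [Matrix.mul_apply]
  simp only [Matrix.transpose_apply]
  by_cases h : (j.2 : ℕ) + 1 < lam j.1
  · rw [ent_eq lam A i.2.2 h, Finset.sum_eq_single (⟨j.1, ⟨(j.2 : ℕ) + 1, h⟩⟩ : I lam)]
    · simp [Jmat]
    · rintro ⟨s, q⟩ - hne
      have hc : ¬(j.1 = s ∧ (q : ℕ) = (j.2 : ℕ) + 1) := by
        rintro ⟨h1, h2⟩
        subst h1
        exact hne (congrArg (Sigma.mk j.1) (Fin.ext h2))
      simp [Jmat, hc]
    · simp
  · rw [ent, dif_neg (fun hc => h hc.2)]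
    apply Finset.sum_eq_zero
    rintro ⟨s, q⟩ -
    have hc : ¬(j.1 = s ∧ (q : ℕ) = (j.2 : ℕ) + 1) := by
      rintro ⟨h1, h2⟩
      subst h1
      exact h (h2 ▸ q.2)
    simp [Jmat, hc]

/-- The defining relation, in out-of-range-zero form. -/
def Rel (A : Matrix (I lam) (I lam) K) : Prop :=
  ∀ (r s : Fin k) (p q : ℕ), p < lam r → q < lam s →
    ent lam A r s (p + 1) q + ent lam A r s p (q + 1) = 0

lemma rel_iff (A : Matrix (I lam) (I lam) K) :
    Jmat lam K * A + A * (Jmat lam K)ᵀ = 0 ↔ Rel lam A := by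
  constructor
  · intro hA r s p q hp hq
    have h := congrFun (congrFun hA ⟨r, ⟨p, hp⟩⟩) ⟨s, ⟨q, hq⟩⟩
    rw [Matrix.add_apply, Matrix.zero_apply, Jmat_mul, mul_JmatT] at h
    exact h
  · intro hA
    ext i j
    rw [Matrix.add_apply, Matrix.zero_apply, Jmat_mul, mul_JmatT]
    exact hA i.1 j.1 i.2 j.2 i.2.2 j.2.2


section Struct
variable {A : Matrix (I lam) (I lam) K}

lemma ent_zero_aux (hA : Rel lam A) {r s : Fin k} :
    ∀ m p q, lam s ≤ q + m → lam s ≤ p + q → ent lam A r s p q = 0 := by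
  intro m
  induction m with
  | zero =>
    intro p q h1 _
    rw [ent, dif_neg (fun hc => by omega)]
  | succ m ih =>
    intro p q h1 h2
    by_cases hq : q < lam s
    · by_cases hp : p < lam r
      · have hp1 : 1 ≤ p := by omega
        have h := hA r s (p - 1) q (by omega) hq
        have h3 : p - 1 + 1 = p := by omega
        rw [h3, ih (p - 1) (q + 1) (by omega) (by omega), add_zero] at h
        exact h
      · rw [ent, dif_neg (fun hc => hp hc.1)]
    · rw [ent, dif_neg (fun hc => hq hc.2)]

lemma ent_zero (hA : Rel lam A) {r s : Fin k} (p q : ℕ) (h2 : lam s ≤ p + q) :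
    ent lam A r s p q = 0 :=
  ent_zero_aux lam hA (lam s) p q (by omega) h2

lemma ent_antidiag (hA : Rel lam A) {r s : Fin k} (hrs : lam s ≤ lam r) :
    ∀ q p, p + q < lam s → ent lam A r s p q = (-1 : K) ^ q * ent lam A r s (p + q) 0 := by
  intro q
  induction q with
  | zero => intro p _; simp
  | succ q ih =>
    intro p h
    have hp : p < lam r := by omega
    have hq : q < lam s := by omega
    have hrel := hA r s p q hp hq
    have h4 := ih (p + 1) (by omega)
    have h5 : p + 1 + q = p + (q + 1) := by omega
    rw [h5] at h4
    rw [eq_neg_of_add_eq_zero_right hrel, h4, pow_succ]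
    ring

lemma ent_row_zero_odd (hA : Rel lam A) (hs : A.IsSymm) [CharZero K] {r : Fin k} {d : ℕ}
    (hodd : d % 2 = 1) : ent lam A r r d 0 = 0 := by
  by_cases hd : d < lam r
  · have h1 := ent_antidiag lam hA (le_refl (lam r)) d 0 (by omega)
    rw [zero_add, ent_symm lam hs] at h1
    have h2 : (-1 : K) ^ d = -1 := Odd.neg_one_pow (Nat.odd_iff.mpr hodd)
    rw [h2, neg_one_mul] at h1
    have h3 : (2 : K) * ent lam A r r d 0 = 0 := by
      rw [two_mul]
      nth_rewrite 1 [h1]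
      exact neg_add_cancel _
    exact (mul_eq_zero.mp h3).resolve_left two_ne_zero
  · exact ent_zero lam hA d 0 (by omega)

end Struct

/-- Free parameter index type. -/
abbrev Param (lam : Fin k → ℕ) : Type :=
  (Σ r : Fin k, Fin ((lam r + 1) / 2)) ⊕ (Σ s : Fin k, Fin (s : ℕ) × Fin (lam s))


variable (K)

/-- Anti-diagonal coefficient. -/
def gcoef (c : Param lam → K) (r s : Fin k) (d : ℕ) : K :=
  if _ : r = s then
    (if h2 : d < lam r ∧ d % 2 = 0 then
      (-1 : K) ^ (d / 2) * c (.inl ⟨r, ⟨d / 2, by omega⟩⟩) else 0)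
  else if h2 : r < s then
    (if hd : d < lam s then c (.inr ⟨s, (⟨r, h2⟩, ⟨d, hd⟩)⟩) else 0)
  else
    (if hd : d < lam r then
      (-1 : K) ^ d * c (.inr ⟨r, (⟨s, by omega⟩, ⟨d, hd⟩)⟩) else 0)

variable {hmono : Antitone lam}

lemma gcoef_eq_zero (hmono : Antitone lam) (c : Param lam → K) (r s : Fin k) (d : ℕ)
    (h : lam r ≤ d ∨ lam s ≤ d) : gcoef lam K c r s d = 0 := by
  unfold gcoef
  split_ifs with h1 h2 h3 h4 h5 <;> try rfl
  · exfalso; subst h1; omega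
  · exfalso
    have := hmono h3.le
    omega
  · exfalso
    have h6 : s < r := by omega
    have := hmono h6.le
    omega

lemma gcoef_swap (c : Param lam → K) (r s : Fin k) (d : ℕ) :
    gcoef lam K c s r d = (-1 : K) ^ d * gcoef lam K c r s d := by
  unfold gcoef
  rcases lt_trichotomy r s with h | h | h
  · rw [dif_neg (by omega : ¬s = r), dif_neg (by omega : ¬s < r),
      dif_neg (by omega : ¬r = s), dif_pos h]
    split_ifs with h1 <;> simp
  · subst h
    rw [dif_pos rfl]
    split_ifs with h1
    · rw [(Nat.even_iff.mpr h1.2 : Even d).neg_one_pow, one_mul]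
    · ring
  · rw [dif_neg (by omega : ¬s = r), dif_pos h,
      dif_neg (by omega : ¬r = s), dif_neg (by omega : ¬r < s)]
    split_ifs with h1
    · rw [← mul_assoc, ← pow_add]
      have he : Even (d + d) := ⟨d, rfl⟩
      rw [he.neg_one_pow, one_mul]
    · ring

/-- The matrix built from parameters. -/
def Fmat (c : Param lam → K) : Matrix (I lam) (I lam) K :=
  Matrix.of fun i j => (-1 : K) ^ (j.2 : ℕ) * gcoef lam K c i.1 j.1 ((i.2 : ℕ) + (j.2 : ℕ))

lemma ent_Fmat (hmono : Antitone lam) (c : Param lam → K) (r s : Fin k) (p q : ℕ) :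
    ent lam (Fmat lam K c) r s p q = (-1 : K) ^ q * gcoef lam K c r s (p + q) := by
  unfold ent
  split_ifs with h
  · rfl
  · rw [gcoef_eq_zero lam K hmono c r s _ (by omega), mul_zero]

lemma Fmat_isSymm (c : Param lam → K) : (Fmat lam K c).IsSymm := by
  ext i j
  obtain ⟨r, p⟩ := i
  obtain ⟨s, q⟩ := j
  show (-1 : K) ^ (p : ℕ) * gcoef lam K c s r ((q : ℕ) + p) =
    (-1 : K) ^ (q : ℕ) * gcoef lam K c r s ((p : ℕ) + (q : ℕ))
  rw [gcoef_swap, show (q : ℕ) + p = (p : ℕ) + q from by omega, ← mul_assoc, ← pow_add,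
    show (p : ℕ) + ((p : ℕ) + (q : ℕ)) = 2 * p + q from by omega, pow_add, pow_mul]
  norm_num

lemma Fmat_rel (hmono : Antitone lam) (c : Param lam → K) : Rel lam (Fmat lam K c) := by
  intro r s p q hp hq
  rw [ent_Fmat lam K hmono, ent_Fmat lam K hmono,
    show p + 1 + q = p + (q + 1) from by omega, pow_succ]
  ring

/-- Read off the free parameters of a matrix. -/
def toParam (A : Matrix (I lam) (I lam) K) : Param lam → K
  | .inl ⟨r, e⟩ => ent lam A r r e e
  | .inr ⟨s, (r', d)⟩ => ent lam A ⟨(r' : ℕ), lt_trans r'.2 s.2⟩ s d 0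

lemma master [CharZero K] (hmono : Antitone lam) {A : Matrix (I lam) (I lam) K}
    (hs : A.IsSymm) (hA : Rel lam A) (r s : Fin k) (p q : ℕ)
    (hp : p < lam r) (hq : q < lam s) :
    ent lam A r s p q = (-1 : K) ^ q * gcoef lam K (toParam lam K A) r s (p + q) := by
  rcases lt_trichotomy r s with h | h | h
  · -- r < s
    have hle : lam s ≤ lam r := hmono h.le
    unfold gcoef
    rw [dif_neg (Fin.ne_of_lt h), dif_pos h]
    by_cases hd : p + q < lam s
    · rw [dif_pos hd]
      have ht : toParam lam K A (.inr ⟨s, (⟨(r : ℕ), h⟩, ⟨p + q, hd⟩)⟩)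
          = ent lam A r s (p + q) 0 := rfl
      rw [ht]
      exact ent_antidiag lam hA hle q p hd
    · rw [dif_neg hd, mul_zero]
      exact ent_zero lam hA p q (by omega)
  · -- r = s
    subst h
    unfold gcoef
    rw [dif_pos rfl]
    by_cases hd : p + q < lam r ∧ (p + q) % 2 = 0
    · rw [dif_pos hd]
      have ht : toParam lam K A (.inl ⟨r, ⟨(p + q) / 2, by omega⟩⟩)
          = ent lam A r r ((p + q) / 2) ((p + q) / 2) := rfl
      rw [ht, ent_antidiag lam hA (le_refl (lam r)) ((p+q)/2) ((p+q)/2) (by omega),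
        show (p + q) / 2 + (p + q) / 2 = p + q from by omega,
        ent_antidiag lam hA (le_refl (lam r)) q p (by omega)]
      have hsign : (-1 : K) ^ ((p+q)/2) * (-1 : K) ^ ((p+q)/2) = 1 := by
        rw [← pow_add]
        exact Even.neg_one_pow ⟨(p+q)/2, rfl⟩
      rw [← mul_assoc ((-1 : K) ^ ((p+q)/2)) ((-1 : K) ^ ((p+q)/2)), hsign, one_mul]
    · rw [dif_neg hd, mul_zero]
      by_cases hd2 : p + q < lam r
      · have hodd : (p + q) % 2 = 1 := by omega
        rw [ent_antidiag lam hA (le_refl (lam r)) q p hd2,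
          ent_row_zero_odd lam hA hs hodd, mul_zero]
      · exact ent_zero lam hA p q (by omega)
  · -- s < r
    have hle : lam r ≤ lam s := hmono h.le
    unfold gcoef
    rw [dif_neg (Fin.ne_of_lt h).symm, dif_neg (by omega : ¬r < s)]
    by_cases hd : p + q < lam r
    · rw [dif_pos hd]
      have ht : toParam lam K A (.inr ⟨r, (⟨(s : ℕ), h⟩, ⟨p + q, hd⟩)⟩)
          = ent lam A s r (p + q) 0 := rfl
      rw [ht, ← ent_symm lam hs r s p q,
        ent_antidiag lam hA hle p q (by omega),
        show q + p = p + q from by omega]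
      rw [← mul_assoc, ← pow_add, show q + (p + q) = 2 * q + p from by omega, pow_add, pow_mul]
      norm_num
    · rw [dif_neg hd, mul_zero]
      rw [← ent_symm lam hs r s p q]
      exact ent_zero lam hA q p (by omega)

lemma toParam_Fmat (hmono : Antitone lam) (c : Param lam → K) :
    toParam lam K (Fmat lam K c) = c := by
  funext x
  match x with
  | .inl ⟨r, e⟩ =>
    show ent lam (Fmat lam K c) r r e e = c (.inl ⟨r, e⟩)
    rw [ent_Fmat lam K hmono]
    have he : (e : ℕ) + e < lam r ∧ ((e : ℕ) + e) % 2 = 0 :=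
      ⟨by have := e.2; omega, by omega⟩
    unfold gcoef
    rw [dif_pos rfl, dif_pos he, ← mul_assoc, ← pow_add,
      (Even.neg_one_pow ⟨(e : ℕ), by omega⟩ : (-1 : K) ^ ((e:ℕ) + ((e:ℕ)+e)/2) = 1), one_mul]
    exact congrArg c (congrArg Sum.inl (congrArg (Sigma.mk r) (Fin.ext (by simp; omega))))
  | .inr ⟨s, (r', d)⟩ =>
    show ent lam (Fmat lam K c) ⟨(r' : ℕ), lt_trans r'.2 s.2⟩ s d 0 = c (.inr ⟨s, (r', d)⟩)
    rw [ent_Fmat lam K hmono]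
    have hlt : (⟨(r' : ℕ), lt_trans r'.2 s.2⟩ : Fin k) < s := r'.2
    unfold gcoef
    rw [dif_neg (Fin.ne_of_lt hlt), dif_pos hlt, dif_pos (by simpa using d.2), pow_zero, one_mul]
    refine congrArg c (congrArg Sum.inr (congrArg (Sigma.mk s) ?_))
    refine Prod.ext ?_ ?_
    · exact Fin.ext rfl
    · exact Fin.ext (by simp)

lemma Fmat_add (c c' : Param lam → K) :
    Fmat lam K (c + c') = Fmat lam K c + Fmat lam K c' := by
  ext i j
  show (-1:K) ^ (j.2:ℕ) * gcoef lam K (c + c') i.1 j.1 _ = _ * gcoef lam K c i.1 j.1 _ + _ * gcoef lam K c' i.1 j.1 _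
  have : gcoef lam K (c + c') i.1 j.1 ((i.2:ℕ)+(j.2:ℕ))
      = gcoef lam K c i.1 j.1 ((i.2:ℕ)+(j.2:ℕ)) + gcoef lam K c' i.1 j.1 ((i.2:ℕ)+(j.2:ℕ)) := by
    unfold gcoef
    split_ifs <;> simp [mul_add]
  rw [this]
  ring

lemma Fmat_smul (a : K) (c : Param lam → K) :
    Fmat lam K (a • c) = a • Fmat lam K c := by
  ext i j
  show (-1:K) ^ (j.2:ℕ) * gcoef lam K (a • c) i.1 j.1 _ = a • ((-1:K) ^ (j.2:ℕ) * gcoef lam K c i.1 j.1 _)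
  have : gcoef lam K (a • c) i.1 j.1 ((i.2:ℕ)+(j.2:ℕ))
      = a * gcoef lam K c i.1 j.1 ((i.2:ℕ)+(j.2:ℕ)) := by
    unfold gcoef
    split_ifs <;> simp [smul_eq_mul] <;> ring
  rw [this, smul_eq_mul]
  ring

section Final

lemma reindex_add {m m' : Type*} (e : m ≃ m') (A B : Matrix m m K) :
    (reindex e e) (A + B) = (reindex e e) A + (reindex e e) B := by
  ext i j
  simp [Matrix.reindex_apply]

lemma reindex_smul {m m' : Type*} (e : m ≃ m') (a : K) (A : Matrix m m K) :
    (reindex e e) (a • A) = a • (reindex e e) A := by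
  ext i j
  simp [Matrix.reindex_apply]

lemma reindex_cond {m m' : Type*} [Fintype m] [Fintype m'] [DecidableEq m] [DecidableEq m']
    (e : m ≃ m') (N B : Matrix m m K) (h1 : B.IsSymm) (h2 : N * B + B * Nᵀ = 0) :
    ((reindex e e) B).IsSymm ∧
      (reindex e e) N * (reindex e e) B + (reindex e e) B * ((reindex e e) N)ᵀ = 0 := by
  constructor
  · rw [Matrix.IsSymm, Matrix.transpose_reindex, h1]
  · have hc : (reindex e e) N * (reindex e e) B + (reindex e e) B * ((reindex e e) N)ᵀ
        = (reindex e e) (N * B + B * Nᵀ) := by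
      rw [Matrix.transpose_reindex]
      simp only [Matrix.reindex_apply]
      rw [Matrix.submatrix_mul_equiv N B _ e.symm _, Matrix.submatrix_mul_equiv B Nᵀ _ e.symm _]
      ext i j
      simp [Matrix.submatrix_apply]
    rw [hc, h2]
    ext i j
    simp [Matrix.reindex_apply]

variable {n : ℕ} [CharZero K]

noncomputable def paramEquiv (hmono : Antitone lam) (hn : ∑ r, lam r = n) :
    (Param lam → K) ≃ₗ[K] fixedSymm K (jordanNilpotent K n k lam) where
  toFun c := ⟨(reindex (blockEquiv lam hn) (blockEquiv lam hn)) (Fmat lam K c), by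
    rw [jordan_eq_reindex lam hn K]
    exact reindex_cond K _ _ _ (Fmat_isSymm lam K c)
      ((rel_iff lam _).mpr (Fmat_rel lam K hmono c))⟩
  map_add' c c' := by
    apply Subtype.ext
    show (reindex _ _) (Fmat lam K (c + c')) = _
    rw [Fmat_add, reindex_add]
    rfl
  map_smul' a c := by
    apply Subtype.ext
    show (reindex _ _) (Fmat lam K (a • c)) = _
    rw [Fmat_smul, reindex_smul]
    rfl
  invFun A := toParam lam K ((reindex (blockEquiv lam hn) (blockEquiv lam hn)).symm A.1)
  left_inv c := by
    show toParam lam K ((reindex _ _).symm ((reindex _ _) (Fmat lam K c))) = c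
    rw [Equiv.symm_apply_apply]
    exact toParam_Fmat lam K hmono c
  right_inv A := by
    apply Subtype.ext
    obtain ⟨hs, heq⟩ := A.2
    set e := blockEquiv lam hn with he
    have hNJ : (reindex e.symm e.symm) (jordanNilpotent K n k lam) = Jmat lam K := by
      rw [jordan_eq_reindex lam hn K, ← Matrix.reindex_symm]
      exact (reindex e e).symm_apply_apply _
    have hB := reindex_cond K e.symm (jordanNilpotent K n k lam) A.1 hs heq
    rw [hNJ] at hB
    have hRel : Rel lam ((reindex e.symm e.symm) A.1) := (rel_iff lam _).mp hB.2
    have hmain : Fmat lam K (toParam lam K ((reindex e e).symm A.1))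
        = (reindex e e).symm A.1 := by
      ext i j
      obtain ⟨r, p⟩ := i
      obtain ⟨s, q⟩ := j
      show (-1 : K) ^ (q : ℕ) * gcoef lam K (toParam lam K ((reindex e e).symm A.1)) r s
        ((p : ℕ) + (q : ℕ)) = (reindex e e).symm A.1 ⟨r, p⟩ ⟨s, q⟩
      have hBB : (reindex e e).symm A.1 = (reindex e.symm e.symm) A.1 := by
        rw [Matrix.reindex_symm]
      rw [hBB, ← master lam K hmono hB.1 hRel r s p q p.2 q.2, ent_eq]
    show (reindex e e) (Fmat lam K (toParam lam K ((reindex e e).symm A.1))) = A.1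
    rw [hmain]
    exact (reindex e e).apply_symm_apply _

end Final

end JordanDim

/-- `S^λ` has dimension `∑ᵢ ⌊(λ_i + 1)/2⌋ + ∑ᵢ (i - 1)·λ_i` (1-indexed `i`; here `r : Fin k`
is 0-indexed, so `(i - 1)` becomes `(r : ℕ)`). -/
theorem jordan_fixed_dim (K : Type*) [Field K] [CharZero K] (n k : ℕ)
    (lam : Fin k → ℕ) (hpos : ∀ r, 1 ≤ lam r) (hmono : Antitone lam)
    (hn : ∑ r, lam r = n) :
    Module.finrank K (fixedSymm K (jordanNilpotent K n k lam)) =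
      (∑ r : Fin k, (lam r + 1) / 2) + ∑ r : Fin k, (r : ℕ) * lam r := by
  rw [← LinearEquiv.finrank_eq (JordanDim.paramEquiv lam K hmono hn),
    Module.finrank_fintype_fun_eq_card]
  simp [JordanDim.Param, Fintype.card_sum, Fintype.card_sigma, Fintype.card_prod]
end

section
/- Let A be a symmetric n×n matrix over K with N_λ·A + A·N_λᵀ = 0. Let D₁(A) be the k×k matrix whose (r,s) entry is the (s_r + 1, s_s + λ_s) entry of A, and let D₂(A) be the (n−k)×(n−k) submatrix of A obtained by deleting, for each 1 ≤ r ≤ k, row s_r + 1 and column s_r + λ_r. Then det(A) = (−1)^{n−k} · det(D₁(A)) · det(D₂(A)). -/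
open Matrix

namespace DetFactAux

variable {n k : ℕ}

lemma psum_zero (lam : Fin k → ℕ) (s : Fin k) (hs : (s : ℕ) = 0) : psum lam s = 0 := by
  rw [psum]
  have : Finset.univ.filter (fun t => t < s) = ∅ := by
    ext t; simp [Fin.lt_def, hs]
  rw [this, Finset.sum_empty]

lemma psum_succ (lam : Fin k → ℕ) {r : ℕ} (h1 : r < k) (h2 : r + 1 < k) :
    psum lam ⟨r + 1, h2⟩ = psum lam ⟨r, h1⟩ + lam ⟨r, h1⟩ := by
  rw [psum, psum]
  have hset : (Finset.univ.filter (fun t => t < (⟨r + 1, h2⟩ : Fin k)))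
      = insert (⟨r, h1⟩ : Fin k) (Finset.univ.filter (fun t => t < (⟨r, h1⟩ : Fin k))) := by
    ext t
    simp only [Finset.mem_filter, Finset.mem_univ, true_and, Finset.mem_insert, Fin.lt_def,
      Fin.ext_iff]
    omega
  rw [hset, Finset.sum_insert (by simp)]
  omega

lemma psum_add_le (lam : Fin k → ℕ) (hn : ∑ r, lam r = n) (r : Fin k) :
    psum lam r + lam r ≤ n := by
  have h1 : lam r + psum lam r ≤ ∑ t, lam t := by
    rw [psum, ← Finset.sum_insert (by simp)]
    exact Finset.sum_le_sum_of_subset (Finset.subset_univ _)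
  omega

lemma psum_last (lam : Fin k → ℕ) (hn : ∑ r, lam r = n) {r : ℕ} (h1 : r < k)
    (h2 : r + 1 = k) : psum lam ⟨r, h1⟩ + lam ⟨r, h1⟩ = n := by
  have hset : (Finset.univ : Finset (Fin k))
      = insert (⟨r, h1⟩ : Fin k) (Finset.univ.filter (fun t => t < (⟨r, h1⟩ : Fin k))) := by
    ext t
    simp only [Finset.mem_filter, Finset.mem_univ, true_and, Finset.mem_insert, Fin.lt_def,
      Fin.ext_iff, true_iff]
    have := t.isLt
    omega
  rw [← hn, hset, Finset.sum_insert (by simp), psum]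
  omega

lemma psum_le_of_lt (lam : Fin k → ℕ) {r s : Fin k} (h : r < s) :
    psum lam r + lam r ≤ psum lam s := by
  have hset : insert r (Finset.univ.filter (fun t => t < r))
      ⊆ Finset.univ.filter (fun t => t < s) := by
    intro t ht
    simp only [Finset.mem_insert, Finset.mem_filter, Finset.mem_univ, true_and] at *
    rcases ht with rfl | ht
    · exact h
    · exact ht.trans h
  calc psum lam r + lam r = ∑ t ∈ insert r (Finset.univ.filter (fun t => t < r)), lam t := by
        rw [Finset.sum_insert (by simp), psum]; omega
    _ ≤ psum lam s := by rw [psum]; exact Finset.sum_le_sum_of_subset hset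

lemma block_unique (lam : Fin k → ℕ) {r s : Fin k} {m : ℕ}
    (hr : psum lam r ≤ m ∧ m < psum lam r + lam r)
    (hs : psum lam s ≤ m ∧ m < psum lam s + lam s) : r = s := by
  rcases lt_trichotomy r s with h | h | h
  · have := psum_le_of_lt lam h; omega
  · exact h
  · have := psum_le_of_lt lam h; omega

lemma kpos (lam : Fin k → ℕ) (hn : ∑ r, lam r = n) (i : Fin n) : 0 < k := by
  by_contra h
  have hk : k = 0 := by omega
  subst hk
  simp only [Finset.univ_eq_empty, Finset.sum_empty] at hn
  have := i.isLt
  omega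

lemma exists_block (lam : Fin k → ℕ) (hn : ∑ r, lam r = n) (i : Fin n) :
    ∃ r : Fin k, psum lam r ≤ (i : ℕ) ∧ (i : ℕ) < psum lam r + lam r := by
  have hk : 0 < k := kpos lam hn i
  set S := Finset.univ.filter (fun r : Fin k => psum lam r ≤ (i : ℕ)) with hS
  have hSne : S.Nonempty := ⟨⟨0, hk⟩, by simp [hS, psum_zero lam ⟨0, hk⟩ rfl]⟩
  refine ⟨S.max' hSne, ?_, ?_⟩
  · have := S.max'_mem hSne
    simp only [hS, Finset.mem_filter] at this
    exact this.2
  · set r := S.max' hSne with hr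
    by_contra hcon
    push_neg at hcon
    rcases Nat.lt_or_ge ((r : ℕ) + 1) k with h2 | h2
    · have hps := psum_succ lam r.isLt h2
      simp only [Fin.eta] at hps
      have hmem : (⟨(r : ℕ) + 1, h2⟩ : Fin k) ∈ S := by
        simp only [hS, Finset.mem_filter, Finset.mem_univ, true_and]
        omega
      have := S.le_max' _ hmem
      rw [← hr] at this
      rw [Fin.le_def] at this
      simp at this
    · have h3 : (r : ℕ) + 1 = k := by omega
      have := psum_last lam hn r.isLt h3
      simp only [Fin.eta] at this
      have := i.isLt
      omega

/-- If `m = psum s ≥ 1` then `m` is the end of the previous block plus one. -/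
lemma start_eq_end_add_one (lam : Fin k → ℕ) {s : Fin k} (h : 1 ≤ psum lam s) :
    ∃ r : Fin k, psum lam s = psum lam r + lam r := by
  have hs : 0 < (s : ℕ) := by
    by_contra h0
    have h0' : (s : ℕ) = 0 := by omega
    have := psum_zero lam s h0'
    omega
  have h1 : (s : ℕ) - 1 < k := by have := s.isLt; omega
  refine ⟨⟨(s : ℕ) - 1, h1⟩, ?_⟩
  have h2 : (s : ℕ) - 1 + 1 < k := by have := s.isLt; omega
  have hps := psum_succ lam h1 h2
  have heq : (⟨(s : ℕ) - 1 + 1, h2⟩ : Fin k) = s := Fin.ext (by simp; omega)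
  rw [heq] at hps
  exact hps

/-- A non-start index is positive and its predecessor is not a block end. -/
lemma nonstart_pred (lam : Fin k → ℕ) (hpos : ∀ r, 1 ≤ lam r) (hn : ∑ r, lam r = n)
    (i : Fin n) (h : ¬∃ r : Fin k, (i : ℕ) = psum lam r) :
    1 ≤ (i : ℕ) ∧ ¬∃ r : Fin k, (i : ℕ) - 1 = psum lam r + lam r - 1 := by
  have hk : 0 < k := kpos lam hn i
  have hi1 : 1 ≤ (i : ℕ) := by
    by_contra h0
    exact h ⟨⟨0, hk⟩, by rw [psum_zero lam ⟨0, hk⟩ rfl]; omega⟩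
  refine ⟨hi1, ?_⟩
  rintro ⟨r, hr⟩
  have hir : (i : ℕ) = psum lam r + lam r := by have := hpos r; omega
  rcases Nat.lt_or_ge ((r : ℕ) + 1) k with h2 | h2
  · refine h ⟨⟨(r : ℕ) + 1, h2⟩, ?_⟩
    have hps := psum_succ lam r.isLt h2
    simp only [Fin.eta] at hps
    omega
  · have h3 : (r : ℕ) + 1 = k := by omega
    have := psum_last lam hn r.isLt h3
    simp only [Fin.eta] at this
    have := i.isLt
    omega

/-- A non-end index satisfies the `jordanNilpotent` nonzero condition. -/
lemma nonend_cond (lam : Fin k → ℕ) (hn : ∑ r, lam r = n) (j : Fin n)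
    (h : ¬∃ r : Fin k, (j : ℕ) = psum lam r + lam r - 1) :
    ∃ r : Fin k, psum lam r ≤ (j : ℕ) ∧ (j : ℕ) + 2 ≤ psum lam r + lam r := by
  obtain ⟨r, h1, h2⟩ := exists_block lam hn j
  refine ⟨r, h1, ?_⟩
  have : (j : ℕ) ≠ psum lam r + lam r - 1 := fun hc => h ⟨r, hc⟩
  omega

/-- A block-end index fails the `jordanNilpotent` nonzero condition. -/
lemma end_nocond (lam : Fin k → ℕ) (hpos : ∀ r, 1 ≤ lam r) (hn : ∑ r, lam r = n)
    (i : Fin n) (hi : ∃ r : Fin k, (i : ℕ) = psum lam r + lam r - 1) :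
    ¬∃ r : Fin k, psum lam r ≤ (i : ℕ) ∧ (i : ℕ) + 2 ≤ psum lam r + lam r := by
  obtain ⟨r0, hr0⟩ := hi
  rintro ⟨r, h1, h2⟩
  have hl0 := hpos r0
  have hl := hpos r
  have heq : r = r0 := block_unique lam ⟨h1, by omega⟩ ⟨by omega, by omega⟩
  subst heq
  omega

/-- Key vanishing: `A i j = 0` for `i` a block-end row and `j` a non-start column. -/
lemma key_zero (K : Type*) [Field K] (lam : Fin k → ℕ) (hpos : ∀ r, 1 ≤ lam r)
    (hn : ∑ r, lam r = n) (A : Matrix (Fin n) (Fin n) K)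
    (hfix : jordanNilpotent K n k lam * A + A * (jordanNilpotent K n k lam)ᵀ = 0)
    (i j : Fin n) (hi : ∃ r : Fin k, (i : ℕ) = psum lam r + lam r - 1)
    (hj : ¬∃ r : Fin k, (j : ℕ) = psum lam r) : A i j = 0 := by
  obtain ⟨hj1, hj2⟩ := nonstart_pred lam hpos hn j hj
  have hjn : (j : ℕ) - 1 < n := by have := j.isLt; omega
  set j' : Fin n := ⟨(j : ℕ) - 1, hjn⟩ with hj'
  have h0 : (jordanNilpotent K n k lam * A + A * (jordanNilpotent K n k lam)ᵀ) i j' = 0 := by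
    rw [hfix]; rfl
  rw [Matrix.add_apply, Matrix.mul_apply, Matrix.mul_apply] at h0
  have hNA : ∑ l, jordanNilpotent K n k lam i l * A l j' = 0 := by
    apply Finset.sum_eq_zero
    intro l _
    have hz : jordanNilpotent K n k lam i l = 0 := by
      rw [jordanNilpotent, Matrix.of_apply, if_neg]
      rintro ⟨-, hc⟩
      exact end_nocond lam hpos hn i hi hc
    rw [hz, zero_mul]
  have hj2' : ¬∃ r : Fin k, (j' : ℕ) = psum lam r + lam r - 1 := hj2
  have hAN : ∑ l, A i l * (jordanNilpotent K n k lam)ᵀ l j' = A i j := by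
    rw [Finset.sum_eq_single j]
    · have hc := nonend_cond lam hn j' hj2'
      rw [Matrix.transpose_apply, jordanNilpotent, Matrix.of_apply, if_pos, mul_one]
      exact ⟨by simp [hj']; omega, hc⟩
    · intro l _ hl
      have hne : (l : ℕ) ≠ (j' : ℕ) + 1 := by
        intro hc
        exact hl (Fin.ext (by simp [hj'] at hc; omega))
      rw [Matrix.transpose_apply, jordanNilpotent, Matrix.of_apply, if_neg, mul_zero]
      rintro ⟨hc, -⟩
      exact hne hc
    · intro hj0
      exact absurd (Finset.mem_univ j) hj0
  rw [hNA, hAN, zero_add] at h0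
  exact h0

/-- The monotone enumeration of non-ends is the predecessor of that of non-starts. -/
lemma ef_rel (lam : Fin k → ℕ) (hpos : ∀ r, 1 ≤ lam r) (hn : ∑ r, lam r = n)
    (e f : Fin (n - k) → Fin n) (he : StrictMono e) (hf : StrictMono f)
    (hre : ∀ i : Fin n, (∃ x, e x = i) ↔ ¬∃ r : Fin k, (i : ℕ) = psum lam r)
    (hrf : ∀ j : Fin n, (∃ x, f x = j) ↔ ¬∃ r : Fin k, (j : ℕ) = psum lam r + lam r - 1) :
    ∀ x, (e x : ℕ) = (f x : ℕ) + 1 := by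
  have hfend : ∀ x, ¬∃ r : Fin k, ((f x : ℕ)) = psum lam r + lam r - 1 :=
    fun x => (hrf (f x)).mp ⟨x, rfl⟩
  have hfx : ∀ x, (f x : ℕ) + 1 < n := by
    intro x
    obtain ⟨r, h1, h2⟩ := nonend_cond lam hn (f x) (hfend x)
    have := psum_add_le lam hn r
    omega
  set g : Fin (n - k) → Fin n := fun x => ⟨(f x : ℕ) + 1, hfx x⟩ with hg
  have hgm : StrictMono g := by
    intro a b hab
    have := hf hab
    simp only [hg, Fin.lt_def] at *
    omega
  have hrange : Set.range g = Set.range e := by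
    ext i
    simp only [Set.mem_range]
    constructor
    · rintro ⟨x, rfl⟩
      rw [hre]
      rintro ⟨r, hr⟩
      simp only [hg] at hr
      obtain ⟨r', hr'⟩ := start_eq_end_add_one lam (s := r) (by omega)
      refine hfend x ⟨r', ?_⟩
      have := hpos r'
      omega
    · rintro ⟨x, rfl⟩
      have hns := (hre (e x)).mp ⟨x, rfl⟩
      obtain ⟨h1, h2⟩ := nonstart_pred lam hpos hn (e x) hns
      have hlt : (e x : ℕ) - 1 < n := by have := (e x).isLt; omega
      obtain ⟨y, hy⟩ := (hrf ⟨(e x : ℕ) - 1, hlt⟩).mpr (by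
        rintro ⟨r, hr⟩
        exact h2 ⟨r, hr⟩)
      refine ⟨y, Fin.ext ?_⟩
      have : (f y : ℕ) = (e x : ℕ) - 1 := congrArg Fin.val hy
      simp only [hg]
      omega
  have hge : g = e := (hgm.range_inj he).mp hrange
  intro x
  rw [← hge]

lemma sign_finRotate' (m : ℕ) (hm : 1 ≤ m) :
    Equiv.Perm.sign (finRotate m) = (-1 : ℤˣ) ^ (m - 1) := by
  obtain ⟨m', rfl⟩ : ∃ m', m = m' + 1 := ⟨m - 1, by omega⟩
  simpa using sign_finRotate m'

lemma finRotate_inv_val (m : ℕ) (q : Fin m) :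
    ((((finRotate m)⁻¹ : Equiv.Perm (Fin m)) q : Fin m) : ℕ) =
      if (q : ℕ) = 0 then m - 1 else (q : ℕ) - 1 := by
  match m with
  | 0 => exact q.elim0
  | m' + 1 =>
    set x : Fin (m' + 1) := (finRotate (m' + 1))⁻¹ q with hx
    have hq : finRotate (m' + 1) x = q := by
      rw [hx]; exact Equiv.apply_symm_apply _ _
    rw [finRotate_succ_apply] at hq
    have hq2 : (q : ℕ) = if x = Fin.last m' then 0 else (x : ℕ) + 1 := by
      rw [← hq]; exact Fin.val_add_one x
    by_cases hl : x = Fin.last m'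
    · rw [if_pos hl] at hq2
      rw [if_pos (by omega)]
      have := congrArg Fin.val hl
      simp only [Fin.val_last] at this
      omega
    · rw [if_neg hl] at hq2
      rw [if_neg (by omega)]
      omega

/-- Membership in the `r`-th block. -/
def inBlock (lam : Fin k → ℕ) (r : Fin k) (i : Fin n) : Prop :=
  psum lam r ≤ (i : ℕ) ∧ (i : ℕ) < psum lam r + lam r

instance (lam : Fin k → ℕ) (r : Fin k) : DecidablePred (inBlock (n := n) lam r) := by
  intro i; unfold inBlock; infer_instance

lemma block_unique' (lam : Fin k → ℕ) {r s : Fin k} {i : Fin n}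
    (h1 : inBlock lam r i) (h2 : inBlock lam s i) : r = s :=
  block_unique lam h1 h2

/-- The `r`-th block as an equiv `Fin (lam r) ≃ {i // inBlock lam r i}`. -/
noncomputable def blockEquiv (lam : Fin k → ℕ) (hn : ∑ r, lam r = n) (r : Fin k) :
    Fin (lam r) ≃ {i : Fin n // inBlock lam r i} :=
  Equiv.ofBijective
    (fun p => ⟨blockIdx lam hn r p p.isLt, by
      constructor
      · simp [blockIdx]
      · simp only [blockIdx]
        have := p.isLt
        omega⟩)
    (by
      constructor
      · intro a b hab
        apply Fin.ext
        have := congrArg (fun z : {i : Fin n // inBlock lam r i} => ((z : Fin n) : ℕ)) hab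
        simp only [blockIdx] at this
        omega
      · rintro ⟨i, hi1, hi2⟩
        refine ⟨⟨(i : ℕ) - psum lam r, by omega⟩, ?_⟩
        apply Subtype.ext
        apply Fin.ext
        simp only [blockIdx]
        omega)

lemma sign_pi (lam : Fin k → ℕ) (hpos : ∀ r, 1 ≤ lam r) (hn : ∑ r, lam r = n)
    (π : Equiv.Perm (Fin n))
    (hπ : ∀ (r : Fin k) (p : ℕ) (hp : p < lam r),
      ((π (blockIdx lam hn r p hp)) : ℕ) =
        if p = 0 then psum lam r + (lam r - 1) else psum lam r + (p - 1)) :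
    Equiv.Perm.sign π = (-1 : ℤˣ) ^ (n - k) := by
  classical
  set c : Fin k → Equiv.Perm (Fin n) := fun r =>
    ((finRotate (lam r))⁻¹).extendDomain (blockEquiv lam hn r) with hc
  have hcfix : ∀ (r : Fin k) (i : Fin n), ¬inBlock lam r i → c r i = i := by
    intro r i hi
    exact Equiv.Perm.extendDomain_apply_not_subtype _ _ hi
  have hcval : ∀ (r : Fin k) (p : ℕ) (hp : p < lam r),
      c r (blockIdx lam hn r p hp) =
        (blockEquiv lam hn r (((finRotate (lam r))⁻¹ : Equiv.Perm (Fin (lam r))) ⟨p, hp⟩) :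
          Fin n) :=
    fun r p hp =>
      Equiv.Perm.extendDomain_apply_image ((finRotate (lam r))⁻¹) (blockEquiv lam hn r) ⟨p, hp⟩
  have hcblock : ∀ (r : Fin k) (i : Fin n), inBlock lam r i → inBlock lam r (c r i) := by
    intro r i hi
    have hi' : i = blockIdx lam hn r ((i : ℕ) - psum lam r) (by obtain ⟨h1, h2⟩ := hi; omega) :=
      Fin.ext (by simp only [blockIdx]; obtain ⟨h1, h2⟩ := hi; omega)
    rw [hi', hcval]
    exact (blockEquiv lam hn r _).2
  have hcomm : ∀ a b : Fin k, a ≠ b → Commute (c a) (c b) := by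
    intro a b hab
    apply Equiv.ext
    intro i
    rw [Equiv.Perm.mul_apply, Equiv.Perm.mul_apply]
    by_cases hia : inBlock lam a i
    · have hib : ¬inBlock lam b i := fun h => hab (block_unique' lam hia h)
      have hib' : ¬inBlock lam b (c a i) :=
        fun h => hab ((block_unique' lam (hcblock a i hia) h))
      rw [hcfix b i hib, hcfix b _ hib']
    · by_cases hib : inBlock lam b i
      · have hia' : ¬inBlock lam a (c b i) :=
          fun h => hab (block_unique' lam h (hcblock b i hib))
        rw [hcfix a i hia, hcfix a _ hia']
      · simp only [hcfix a i hia, hcfix b i hib]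
  have hprod : ∀ (s : Finset (Fin k))
      (comm : (s : Set (Fin k)).Pairwise (Function.onFun Commute c)) (i : Fin n) (r0 : Fin k),
      inBlock lam r0 i → (s.noncommProd c comm) i = if r0 ∈ s then c r0 i else i := by
    intro s
    induction s using Finset.induction_on with
    | empty => intro comm i r0 _; simp
    | @insert a s ha ih =>
      intro comm i r0 h0
      rw [Finset.noncommProd_insert_of_notMem _ _ _ _ ha, Equiv.Perm.mul_apply, ih _ i r0 h0]
      by_cases hm : r0 ∈ s
      · rw [if_pos hm, if_pos (Finset.mem_insert_of_mem hm)]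
        have hane : a ≠ r0 := fun h => ha (h ▸ hm)
        apply hcfix
        intro hb2
        exact hane (block_unique' lam hb2 (hcblock r0 i h0))
      · rw [if_neg hm]
        by_cases har : a = r0
        · subst har
          rw [if_pos (Finset.mem_insert_self _ _)]
        · rw [if_neg (by
            intro hmem
            rcases Finset.mem_insert.mp hmem with h | h
            · exact har h.symm
            · exact hm h)]
          apply hcfix
          intro hb2
          exact har (block_unique' lam hb2 h0)
  have hcval2 : ∀ (r : Fin k) (p : ℕ) (hp : p < lam r),
      ((c r (blockIdx lam hn r p hp)) : ℕ) =
        if p = 0 then psum lam r + (lam r - 1) else psum lam r + (p - 1) := by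
    intro r p hp
    rw [hcval r p hp]
    have hrfl : ((blockEquiv lam hn r
        ((((finRotate (lam r))⁻¹ : Equiv.Perm (Fin (lam r)))) ⟨p, hp⟩) : Fin n) : ℕ)
        = psum lam r + ((((finRotate (lam r))⁻¹ : Equiv.Perm (Fin (lam r))))
            (⟨p, hp⟩ : Fin (lam r)) : ℕ) := rfl
    rw [hrfl, finRotate_inv_val]
    by_cases h : p = 0
    · subst h
      rw [if_pos rfl, if_pos (by exact rfl)]
    · rw [if_neg h, if_neg (by exact h)]
  have hcommU : ((Finset.univ : Finset (Fin k)) : Set (Fin k)).Pairwise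
      (Function.onFun Commute c) := fun a _ b _ hab => hcomm a b hab
  have hpi : π = Finset.univ.noncommProd c hcommU := by
    apply Equiv.ext
    intro i
    obtain ⟨r0, h1, h2⟩ := exists_block lam hn i
    have hi' : i = blockIdx lam hn r0 ((i : ℕ) - psum lam r0) (by omega) :=
      Fin.ext (by simp only [blockIdx]; omega)
    rw [hprod Finset.univ hcommU i r0 ⟨h1, h2⟩, if_pos (Finset.mem_univ r0)]
    apply Fin.ext
    rw [hi', hπ r0 _ _, hcval2]
  rw [hpi, Finset.map_noncommProd _ _ _ (Equiv.Perm.sign : Equiv.Perm (Fin n) →* ℤˣ),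
    Finset.noncommProd_eq_prod]
  have hsr : ∀ r : Fin k, Equiv.Perm.sign (c r) = (-1 : ℤˣ) ^ (lam r - 1) := by
    intro r
    calc Equiv.Perm.sign (c r) = Equiv.Perm.sign ((finRotate (lam r))⁻¹) :=
          Equiv.Perm.sign_extendDomain _ _
      _ = Equiv.Perm.sign (finRotate (lam r)) := by simp
      _ = (-1 : ℤˣ) ^ (lam r - 1) := sign_finRotate' _ (hpos r)
  rw [Finset.prod_congr rfl (fun r _ => hsr r), Finset.prod_pow_eq_pow_sum]
  congr 1
  have hsum : ∑ r, (lam r - 1 + 1) = n := by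
    rw [← hn]
    exact Finset.sum_congr rfl (fun r _ => by have := hpos r; omega)
  rw [Finset.sum_add_distrib] at hsum
  simp only [Finset.sum_const, Finset.card_univ, Fintype.card_fin, smul_eq_mul, mul_one] at hsum
  omega

end DetFactAux

/-- The determinant factorization `det A = (-1)^(n-k) · det D₁(A) · det D₂(A)`, where
`D₁(A)` is the `k × k` matrix of top-right entries of the blocks of `A`, and `D₂(A)` is the
submatrix of `A` obtained by deleting the top row and the rightmost column of every diagonal
block (the deleted rows are indexed by `s_r` and the deleted columns by `s_r + λ_r - 1`,
0-indexed; `e` and `f` are the monotone enumerations of the remaining rows and columns). -/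
theorem det_factorization (K : Type*) [Field K] [CharZero K] (n k : ℕ)
    (lam : Fin k → ℕ) (hpos : ∀ r, 1 ≤ lam r) (hmono : Antitone lam)
    (hn : ∑ r, lam r = n) (A : Matrix (Fin n) (Fin n) K) (hA : A.IsSymm)
    (hfix : jordanNilpotent K n k lam * A + A * (jordanNilpotent K n k lam)ᵀ = 0)
    (e f : Fin (n - k) → Fin n) (he : StrictMono e) (hf : StrictMono f)
    (hre : ∀ i : Fin n, (∃ x, e x = i) ↔ ¬∃ r : Fin k, (i : ℕ) = psum lam r)
    (hrf : ∀ j : Fin n, (∃ x, f x = j) ↔ ¬∃ r : Fin k, (j : ℕ) = psum lam r + lam r - 1) :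
    A.det =
      (-1 : K) ^ (n - k) *
        (Matrix.of fun r s : Fin k =>
            A (blockIdx lam hn r 0 (hpos r))
              (blockIdx lam hn s (lam s - 1) (Nat.sub_lt (hpos s) Nat.one_pos))).det *
        (A.submatrix e f).det := by
  classical
  have hef := DetFactAux.ef_rel lam hpos hn e f he hf hre hrf
  set D₁ : Matrix (Fin k) (Fin k) K := Matrix.of fun r s : Fin k =>
      A (blockIdx lam hn r 0 (hpos r))
        (blockIdx lam hn s (lam s - 1) (Nat.sub_lt (hpos s) Nat.one_pos)) with hD₁
  set ρf : Fin k ⊕ Fin (n - k) → Fin n :=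
    Sum.elim (fun r => blockIdx lam hn r 0 (hpos r)) e with hρf
  set κf : Fin k ⊕ Fin (n - k) → Fin n :=
    Sum.elim (fun s => blockIdx lam hn s (lam s - 1) (Nat.sub_lt (hpos s) Nat.one_pos)) f
    with hκf
  have hρbij : Function.Bijective ρf := by
    constructor
    · rintro (r | x) (s | y) h
      · have hval : psum lam r + 0 = psum lam s + 0 := congrArg Fin.val h
        have : r = s := by
          rcases lt_trichotomy r s with hlt | heq | hlt
          · have := DetFactAux.psum_le_of_lt lam hlt; have := hpos r; omega
          · exact heq
          · have := DetFactAux.psum_le_of_lt lam hlt; have := hpos s; omega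
        rw [this]
      · exfalso
        have hval : psum lam r + 0 = ((e y : Fin n) : ℕ) := congrArg Fin.val h
        exact ((hre (e y)).mp ⟨y, rfl⟩) ⟨r, by omega⟩
      · exfalso
        have hval : ((e x : Fin n) : ℕ) = psum lam s + 0 := congrArg Fin.val h
        exact ((hre (e x)).mp ⟨x, rfl⟩) ⟨s, by omega⟩
      · rw [he.injective h]
    · intro i
      by_cases hs : ∃ r : Fin k, (i : ℕ) = psum lam r
      · obtain ⟨r, hr⟩ := hs
        exact ⟨Sum.inl r, Fin.ext (by show psum lam r + 0 = (i : ℕ); omega)⟩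
      · obtain ⟨x, hx⟩ := (hre i).mpr hs
        exact ⟨Sum.inr x, hx⟩
  have hκbij : Function.Bijective κf := by
    constructor
    · rintro (r | x) (s | y) h
      · have hval : psum lam r + (lam r - 1) = psum lam s + (lam s - 1) := congrArg Fin.val h
        have : r = s := by
          rcases lt_trichotomy r s with hlt | heq | hlt
          · have := DetFactAux.psum_le_of_lt lam hlt
            have := hpos r; have := hpos s; omega
          · exact heq
          · have := DetFactAux.psum_le_of_lt lam hlt
            have := hpos r; have := hpos s; omega
        rw [this]
      · exfalso
        have hval : psum lam r + (lam r - 1) = ((f y : Fin n) : ℕ) := congrArg Fin.val h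
        have := hpos r
        exact ((hrf (f y)).mp ⟨y, rfl⟩) ⟨r, by omega⟩
      · exfalso
        have hval : ((f x : Fin n) : ℕ) = psum lam s + (lam s - 1) := congrArg Fin.val h
        have := hpos s
        exact ((hrf (f x)).mp ⟨x, rfl⟩) ⟨s, by omega⟩
      · rw [hf.injective h]
    · intro i
      by_cases hs : ∃ r : Fin k, (i : ℕ) = psum lam r + lam r - 1
      · obtain ⟨r, hr⟩ := hs
        have := hpos r
        exact ⟨Sum.inl r, Fin.ext (by show psum lam r + (lam r - 1) = (i : ℕ); omega)⟩
      · obtain ⟨x, hx⟩ := (hrf i).mpr hs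
        exact ⟨Sum.inr x, hx⟩
  have hsubeq : A.submatrix ρf κf = Matrix.fromBlocks D₁
      (Matrix.of fun (r : Fin k) (y : Fin (n - k)) => A (blockIdx lam hn r 0 (hpos r)) (f y))
      0 (A.submatrix e f) := by
    ext i j
    rcases i with r | x <;> rcases j with s | y
    · rfl
    · rfl
    · show A (e x) (blockIdx lam hn s (lam s - 1) (Nat.sub_lt (hpos s) Nat.one_pos)) = 0
      have hsym : A (e x) (blockIdx lam hn s (lam s - 1) (Nat.sub_lt (hpos s) Nat.one_pos))
          = A (blockIdx lam hn s (lam s - 1) (Nat.sub_lt (hpos s) Nat.one_pos)) (e x) :=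
        (hA.apply _ _).symm
      rw [hsym]
      apply DetFactAux.key_zero K lam hpos hn A hfix
      · exact ⟨s, by have := hpos s; simp [blockIdx]; omega⟩
      · exact (hre (e x)).mp ⟨x, rfl⟩
    · rfl
  have hdet1 : (A.submatrix ρf κf).det = D₁.det * (A.submatrix e f).det := by
    rw [hsubeq, Matrix.det_fromBlocks_zero₂₁]
  set ρ : (Fin k ⊕ Fin (n - k)) ≃ Fin n := Equiv.ofBijective ρf hρbij with hρ
  set κ : (Fin k ⊕ Fin (n - k)) ≃ Fin n := Equiv.ofBijective κf hκbij with hκ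
  set g : Equiv.Perm (Fin k ⊕ Fin (n - k)) := κ.trans ρ.symm with hg
  have hgf : ∀ z, ρ (g z) = κ z := fun z => Equiv.apply_symm_apply ρ (κ z)
  have hsub2 : A.submatrix ρf κf = (A.submatrix ⇑ρ ⇑ρ).submatrix id ⇑g := by
    rw [Matrix.submatrix_submatrix]
    have h1 : ⇑ρ ∘ id = ρf := by funext z; rfl
    have h2 : ⇑ρ ∘ ⇑g = κf := by funext z; exact hgf z
    rw [h1, h2]
  have hdet2 : (A.submatrix ρf κf).det = (Equiv.Perm.sign g : ℤ) * A.det := by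
    rw [hsub2, Matrix.det_permute' g, Matrix.det_submatrix_equiv_self]
  have hsigng : Equiv.Perm.sign g = (-1 : ℤˣ) ^ (n - k) := by
    rw [← Equiv.Perm.sign_permCongr ρ g]
    apply DetFactAux.sign_pi lam hpos hn
    intro r p hp
    have happ : (ρ.permCongr g) (blockIdx lam hn r p hp)
        = κ (ρ.symm (blockIdx lam hn r p hp)) := by
      rw [Equiv.permCongr_apply, hgf]
    by_cases hp0 : p = 0
    · subst hp0
      have hsymm : ρ.symm (blockIdx lam hn r 0 hp) = Sum.inl r := by
        rw [Equiv.symm_apply_eq]; rfl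
      rw [happ, hsymm, if_pos rfl]
      rfl
    · have hns : ¬∃ s : Fin k, ((blockIdx lam hn r p hp : Fin n) : ℕ) = psum lam s := by
        rintro ⟨s, hs⟩
        simp only [blockIdx] at hs
        have hm : psum lam r ≤ psum lam r + p ∧ psum lam r + p < psum lam r + lam r :=
          ⟨by omega, by omega⟩
        have hs' : psum lam s ≤ psum lam r + p ∧ psum lam r + p < psum lam s + lam s := by
          have := hpos s; omega
        have := DetFactAux.block_unique lam hm hs'
        subst this
        omega
      obtain ⟨x, hx⟩ := (hre _).mpr hns
      have hsymm : ρ.symm (blockIdx lam hn r p hp) = Sum.inr x := by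
        rw [Equiv.symm_apply_eq]; exact hx.symm
      rw [happ, hsymm, if_neg hp0]
      have h1 : (e x : ℕ) = (f x : ℕ) + 1 := hef x
      have h2 : (e x : ℕ) = psum lam r + p := congrArg Fin.val hx
      show (f x : ℕ) = psum lam r + (p - 1)
      omega
  have hcast : (((Equiv.Perm.sign g : ℤˣ) : ℤ) : K) = (-1 : K) ^ (n - k) := by
    rw [hsigng]
    push_cast
    norm_num
  have hdetfinal : D₁.det * (A.submatrix e f).det = (-1 : K) ^ (n - k) * A.det := by
    rw [← hdet1, hdet2, hcast]
  have hsq : (-1 : K) ^ (n - k) * (-1 : K) ^ (n - k) = 1 := by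
    rw [← pow_add]
    exact Even.neg_one_pow ⟨n - k, rfl⟩
  calc A.det = ((-1 : K) ^ (n - k) * (-1 : K) ^ (n - k)) * A.det := by rw [hsq, one_mul]
    _ = (-1 : K) ^ (n - k) * ((-1 : K) ^ (n - k) * A.det) := by ring
    _ = (-1 : K) ^ (n - k) * (D₁.det * (A.submatrix e f).det) := by rw [hdetfinal]
    _ = (-1 : K) ^ (n - k) * D₁.det * (A.submatrix e f).det := by ring
end

section
/- Every symmetric n×n matrix A over K satisfying N_λ·A + A·N_λᵀ = 0 has rank(A) ≤ n − d(λ). -/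
open Matrix

/-- The degeneracy number `d(λ)`: the number of even integers occurring as a part of `λ`
with odd multiplicity. -/
def degeneracy {k : ℕ} (lam : Fin k → ℕ) : ℕ :=
  ((Finset.univ.image lam).filter fun m =>
    Even m ∧ Odd ((Finset.univ.filter fun r => lam r = m)).card).card

set_option linter.unreachableTactic false
set_option linter.unusedTactic false
set_option maxHeartbeats 1000000

theorem psum_add_le {n k : ℕ} (lam : Fin k → ℕ) (hn : ∑ r, lam r = n) (r : Fin k) :
    psum lam r + lam r ≤ n := by
  have h1 : lam r + psum lam r ≤ ∑ t, lam t := by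
    rw [psum, ← Finset.sum_insert (by simp)]
    exact Finset.sum_le_sum_of_subset (Finset.subset_univ _)
  omega

theorem psum_mono {k : ℕ} (lam : Fin k → ℕ) {r r' : Fin k} (h : r < r') :
    psum lam r + lam r ≤ psum lam r' := by
  have : lam r + psum lam r ≤ psum lam r' := by
    rw [psum, psum, ← Finset.sum_insert (by simp)]
    apply Finset.sum_le_sum_of_subset
    intro t ht
    simp only [Finset.mem_insert, Finset.mem_filter, Finset.mem_univ, true_and] at ht ⊢
    rcases ht with h1 | h1
    · exact h1 ▸ h
    · exact lt_trans h1 h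
  omega

theorem block_uniq {k : ℕ} (lam : Fin k → ℕ) {x : ℕ} {r r' : Fin k}
    (h1 : psum lam r ≤ x) (h2 : x < psum lam r + lam r)
    (h3 : psum lam r' ≤ x) (h4 : x < psum lam r' + lam r') : r = r' := by
  rcases lt_trichotomy r r' with h | h | h
  · have := psum_mono lam h; omega
  · exact h
  · have := psum_mono lam h; omega

theorem jordan_pow_apply (K : Type*) [Field K] (n k : ℕ) (lam : Fin k → ℕ)
    {j : ℕ} (hj : 1 ≤ j) :
    (jordanNilpotent K n k lam) ^ j = Matrix.of fun i c : Fin n =>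
      if (c : ℕ) = (i : ℕ) + j ∧
          ∃ r : Fin k, psum lam r ≤ (i : ℕ) ∧ (i : ℕ) + j + 1 ≤ psum lam r + lam r
        then 1 else 0 := by
  induction j with
  | zero => omega
  | succ j ih =>
    by_cases hj0 : j = 0
    · subst hj0
      ext i c
      rw [zero_add, pow_one]
      refine if_congr ?_ rfl rfl
      constructor
      · rintro ⟨h1, r, h2, h3⟩; exact ⟨by omega, r, h2, by omega⟩
      · rintro ⟨h1, r, h2, h3⟩; exact ⟨by omega, r, h2, by omega⟩
    · have hj' : 1 ≤ j := by omega
      clear hj0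
      rw [pow_succ, ih hj']
      ext i c
      rw [mul_apply]
      by_cases hc : (c : ℕ) = (i : ℕ) + (j + 1) ∧
          ∃ r : Fin k, psum lam r ≤ (i : ℕ) ∧ (i : ℕ) + (j + 1) + 1 ≤ psum lam r + lam r
      · obtain ⟨hceq, r, hr1, hr2⟩ := hc
        have hlval : (i : ℕ) + j < n := by omega
        have : (Matrix.of fun i c : Fin n =>
            if (c : ℕ) = (i : ℕ) + (j+1) ∧
                ∃ r : Fin k, psum lam r ≤ (i : ℕ) ∧ (i : ℕ) + (j+1) + 1 ≤ psum lam r + lam r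
              then (1:K) else 0) i c = 1 := by
          simp only [of_apply]
          rw [if_pos]
          refine ⟨?_, r, ?_, ?_⟩ <;> first | trivial | omega
        rw [this]
        set l : Fin n := ⟨(i : ℕ) + j, hlval⟩ with hl
        have hlv : (l : ℕ) = (i : ℕ) + j := rfl
        rw [Finset.sum_eq_single l]
        · have e1 : (Matrix.of fun i c : Fin n =>
              if (c : ℕ) = (i : ℕ) + j ∧
                  ∃ r : Fin k, psum lam r ≤ (i : ℕ) ∧ (i : ℕ) + j + 1 ≤ psum lam r + lam r
                then (1:K) else 0) i l = 1 := by
            simp only [of_apply]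
            rw [if_pos]
            refine ⟨?_, r, ?_, ?_⟩ <;> first | trivial | omega
          have e2 : jordanNilpotent K n k lam l c = 1 := by
            simp only [jordanNilpotent, of_apply]
            rw [if_pos]
            refine ⟨?_, r, ?_, ?_⟩ <;> first | trivial | omega
          rw [e1, e2, one_mul]
        · intro l' _ hl'
          have : ¬((l' : ℕ) = (i : ℕ) + j ∧
              ∃ r : Fin k, psum lam r ≤ (i : ℕ) ∧ (i : ℕ) + j + 1 ≤ psum lam r + lam r) := by
            rintro ⟨hv, -⟩
            exact hl' (Fin.ext (by omega))
          simp only [of_apply, if_neg this, zero_mul]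
        · intro h; exact absurd (Finset.mem_univ l) h
      · have : (Matrix.of fun i c : Fin n =>
            if (c : ℕ) = (i : ℕ) + (j+1) ∧
                ∃ r : Fin k, psum lam r ≤ (i : ℕ) ∧ (i : ℕ) + (j+1) + 1 ≤ psum lam r + lam r
              then (1:K) else 0) i c = 0 := by
          simp only [of_apply, if_neg hc]
        rw [this]
        apply Finset.sum_eq_zero
        intro l _
        by_cases hA : (l : ℕ) = (i : ℕ) + j ∧
            ∃ r : Fin k, psum lam r ≤ (i : ℕ) ∧ (i : ℕ) + j + 1 ≤ psum lam r + lam r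
        · by_cases hB : (c : ℕ) = (l : ℕ) + 1 ∧
              ∃ r' : Fin k, psum lam r' ≤ (l : ℕ) ∧ (l : ℕ) + 2 ≤ psum lam r' + lam r'
          · exfalso
            obtain ⟨hlv, r, hr1, hr2⟩ := hA
            obtain ⟨hcv, r', hr1', hr2'⟩ := hB
            have hrr : r = r' := by
              apply block_uniq lam (x := (i : ℕ) + j) (by omega) (by omega) (by omega) (by omega)
            subst hrr
            exact hc ⟨by omega, r, hr1, by omega⟩
          · simp only [jordanNilpotent, of_apply, if_neg hB, mul_zero]
        · simp only [of_apply, if_neg hA, zero_mul]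

section S2
variable {K : Type*} [Field K] {n k : ℕ}

theorem jordan_pow_eq_zero (K : Type*) [Field K] (n k : ℕ) (lam : Fin k → ℕ)
    (hn : ∑ r, lam r = n) {j : ℕ} (hj : n ≤ j) (hj1 : 1 ≤ j) :
    (jordanNilpotent K n k lam) ^ j = 0 := by
  rw [jordan_pow_apply K n k lam hj1]
  ext i c
  simp only [of_apply, Matrix.zero_apply, ite_eq_right_iff]
  rintro ⟨h1, r, h2, h3⟩
  have := psum_add_le lam hn r
  exfalso; omega

theorem card_block_filter (lam : Fin k → ℕ) (hn : ∑ r, lam r = n) (j : ℕ) :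
    (Finset.univ.filter fun i : Fin n =>
      ∃ r : Fin k, psum lam r ≤ (i : ℕ) ∧ (i : ℕ) + j + 1 ≤ psum lam r + lam r).card
      = ∑ r, (lam r - j) := by
  have : ∑ r, (lam r - j) = (Finset.univ.sigma fun r : Fin k => Finset.range (lam r - j)).card := by
    rw [Finset.card_sigma]
    simp
  rw [this]
  symm
  apply Finset.card_bij (fun (a : (_ : Fin k) × ℕ) ha =>
    (⟨psum lam a.1 + a.2, by
      have ha' := (Finset.mem_sigma.mp ha).2
      simp only [Finset.mem_range] at ha'
      exact psum_add_lt lam hn a.1 a.2 (by omega)⟩ : Fin n))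
  · intro a ha
    have ha' := (Finset.mem_sigma.mp ha).2
    simp only [Finset.mem_range] at ha'
    simp only [Finset.mem_filter, Finset.mem_univ, true_and]
    exact ⟨a.1, Nat.le_add_right _ _, by
      show psum lam a.1 + a.2 + j + 1 ≤ psum lam a.1 + lam a.1
      omega⟩
  · rintro ⟨r, p⟩ ha ⟨r', p'⟩ hb hab
    simp only [Finset.mem_sigma, Finset.mem_univ, Finset.mem_range, true_and] at ha hb
    have hv : psum lam r + p = psum lam r' + p' := congrArg Fin.val hab
    have hr : r = r' := by
      apply block_uniq lam (x := psum lam r + p) (Nat.le_add_right _ _) (by omega) (by omega)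
        (by omega)
    subst hr
    simp only [Sigma.mk.inj_iff, heq_eq_eq]
    exact ⟨trivial, by omega⟩
  · intro i hi
    simp only [Finset.mem_filter, Finset.mem_univ, true_and] at hi
    obtain ⟨r, h1, h2⟩ := hi
    refine ⟨⟨r, (i : ℕ) - psum lam r⟩, ?_, ?_⟩
    · simp only [Finset.mem_sigma, Finset.mem_univ, Finset.mem_range, true_and]
      omega
    · apply Fin.ext
      simp
      omega

theorem jordan_pow_rank (K : Type*) [Field K] (n k : ℕ) (lam : Fin k → ℕ)
    (hn : ∑ r, lam r = n) (j : ℕ) :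
    ((jordanNilpotent K n k lam) ^ j).rank = ∑ r, (lam r - j) := by
  rcases Nat.eq_zero_or_pos j with hj | hj
  · subst hj
    simp only [pow_zero, Matrix.rank_one, Fintype.card_fin, Nat.sub_zero]
    exact hn.symm
  · rw [jordan_pow_apply K n k lam hj, Matrix.rank_eq_finrank_span_cols]
    set P : Fin n → Prop := fun i =>
      ∃ r : Fin k, psum lam r ≤ (i : ℕ) ∧ (i : ℕ) + j + 1 ≤ psum lam r + lam r with hP
    classical
    have hspan : Submodule.span K (Set.range (Matrix.of fun i c : Fin n =>
          if (c : ℕ) = (i : ℕ) + j ∧ P i then (1:K) else 0)ᵀ)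
        = Submodule.span K (Set.range fun i : {i : Fin n // P i} =>
            (Pi.single (i : Fin n) (1:K) : Fin n → K)) := by
      apply le_antisymm
      · rw [Submodule.span_le]
        rintro - ⟨c, rfl⟩
        by_cases hc : ∃ i : Fin n, (c : ℕ) = (i : ℕ) + j ∧ P i
        · obtain ⟨i0, hceq, hPi⟩ := hc
          have : (Matrix.of fun i c : Fin n =>
              if (c : ℕ) = (i : ℕ) + j ∧ P i then (1:K) else 0)ᵀ c
              = Pi.single (i0 : Fin n) (1:K) := by
            funext i'
            simp only [Matrix.transpose_apply, Matrix.of_apply]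
            by_cases hii : i' = i0
            · subst hii
              rw [if_pos ⟨hceq, hPi⟩, Pi.single_eq_same]
            · rw [if_neg, Pi.single_eq_of_ne hii]
              rintro ⟨h1, -⟩
              exact hii (Fin.ext (by omega))
          rw [this]
          exact Submodule.subset_span ⟨⟨i0, hPi⟩, rfl⟩
        · have : (Matrix.of fun i c : Fin n =>
              if (c : ℕ) = (i : ℕ) + j ∧ P i then (1:K) else 0)ᵀ c = 0 := by
            funext i'
            simp only [Matrix.transpose_apply, Matrix.of_apply, Pi.zero_apply]
            rw [if_neg]
            rintro ⟨h1, h2⟩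
            exact hc ⟨i', h1, h2⟩
          rw [this]
          exact Submodule.zero_mem _
      · rw [Submodule.span_le]
        rintro - ⟨⟨i0, hPi⟩, rfl⟩
        beta_reduce
        obtain ⟨r, hr1, hr2⟩ := hPi
        have hcn : (i0 : ℕ) + j < n := by
          have := psum_add_le lam hn r; omega
        have : (Pi.single (i0 : Fin n) (1:K) : Fin n → K)
            = (Matrix.of fun i c : Fin n =>
              if (c : ℕ) = (i : ℕ) + j ∧ P i then (1:K) else 0)ᵀ ⟨(i0 : ℕ) + j, hcn⟩ := by
          funext i'
          simp only [Matrix.transpose_apply, Matrix.of_apply]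
          by_cases hii : i' = i0
          · subst hii
            rw [if_pos ⟨rfl, r, hr1, hr2⟩, Pi.single_eq_same]
          · rw [if_neg, Pi.single_eq_of_ne hii]
            rintro ⟨h1, -⟩
            exact hii (Fin.ext (by omega))
        rw [this]
        exact Submodule.subset_span ⟨_, rfl⟩
    change Module.finrank K ↥(Submodule.span K (Set.range (Matrix.of fun i c : Fin n =>
          if (c : ℕ) = (i : ℕ) + j ∧ P i then (1:K) else 0)ᵀ)) = _
    rw [hspan]
    have hli : LinearIndependent K (fun i : {i : Fin n // P i} =>
        (Pi.single (i : Fin n) (1:K) : Fin n → K)) := by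
      have hb := (Pi.basisFun K (Fin n)).linearIndependent
      have := hb.comp (Subtype.val : {i : Fin n // P i} → Fin n) Subtype.val_injective
      convert this using 2 with i
      simp [Pi.basisFun_apply]
    rw [finrank_span_eq_card hli, ← card_block_filter lam hn j, Fintype.card_subtype]
end S2

section S3
theorem rank_mul_add_finrank {K : Type*} [Field K] {n : ℕ}
    (N X : Matrix (Fin n) (Fin n) K) :
    (N * X).rank + Module.finrank K
      ↥(LinearMap.ker N.mulVecLin ⊓ LinearMap.range X.mulVecLin) = X.rank := by
  classical
  set f := N.mulVecLin
  set p := LinearMap.range X.mulVecLin with hp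
  have h1 : (N * X).rank = Module.finrank K ↥(p.map f) := by
    rw [Matrix.rank, Matrix.mulVecLin_mul, LinearMap.range_comp]
  have h2 : X.rank = Module.finrank K ↥p := rfl
  rw [h1, h2]
  have h3 := LinearMap.finrank_range_add_finrank_ker (f.domRestrict p)
  have h4 : LinearMap.range (f.domRestrict p) = p.map f := by
    ext y
    simp [LinearMap.mem_range, Submodule.mem_map, LinearMap.domRestrict_apply]
  have h5 : Module.finrank K ↥(LinearMap.ker (f.domRestrict p))
      = Module.finrank K ↥(LinearMap.ker f ⊓ p) := by
    have he : LinearMap.ker (f.domRestrict p)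
        = Submodule.comap p.subtype (LinearMap.ker f ⊓ p) := by
      ext x
      simp [LinearMap.mem_ker, LinearMap.domRestrict_apply, Submodule.mem_comap]
    rw [he]
    exact (Submodule.comapSubtypeEquivOfLe inf_le_right).finrank_eq
  rw [h4, h5] at h3
  omega

theorem rank_mul_descend {K : Type*} [Field K] {n : ℕ}
    (N X Y : Matrix (Fin n) (Fin n) K)
    (h : LinearMap.range X.mulVecLin ≤ LinearMap.range Y.mulVecLin) :
    (N * Y).rank + X.rank ≤ (N * X).rank + Y.rank := by
  have h1 := rank_mul_add_finrank N X
  have h2 := rank_mul_add_finrank N Y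
  have h3 : Module.finrank K ↥(LinearMap.ker N.mulVecLin ⊓ LinearMap.range X.mulVecLin)
      ≤ Module.finrank K ↥(LinearMap.ker N.mulVecLin ⊓ LinearMap.range Y.mulVecLin) :=
    Submodule.finrank_mono (inf_le_inf_left _ h)
  omega

theorem even_rank_of_skew {K : Type*} [Field K] [CharZero K] {m : Type*} [Fintype m]
    [DecidableEq m] (B : Matrix m m K) (h : Bᵀ = -B) : Even B.rank := by
  classical
  rw [← Nat.not_odd_iff_even]
  intro hodd
  obtain ⟨b, hbsub, hbspan, hbli⟩ := exists_linearIndependent K (Set.range Bᵀ)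
  have hfin : b.Finite := (Set.finite_range Bᵀ).subset hbsub
  haveI := hfin.fintype
  have hcard : B.rank = Fintype.card b := by
    rw [Matrix.rank_eq_finrank_span_cols, show ∀ M : Matrix m m K, M.col = Mᵀ from fun _ => rfl,
      ← hbspan, finrank_span_set_eq_card hbli,
      Set.toFinset_card]
  have hc : ∀ v : b, ∃ jj : m, Bᵀ jj = (v : m → K) := fun v => hbsub v.2
  set c : b → m := fun v => (hc v).choose with hcdef
  have hcc : ∀ v : b, Bᵀ (c v) = (v : m → K) := fun v => (hc v).choose_spec
  set C : Matrix b b K := B.submatrix (fun v => c v) (fun v => c v) with hC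
  have hCskew : Cᵀ = -C := by
    ext v w
    have h1 : B (c w) (c v) = Bᵀ (c v) (c w) := rfl
    simp only [hC, Matrix.transpose_apply, Matrix.submatrix_apply, Matrix.neg_apply]
    rw [h1, h]
    simp
  have hdet : C.det = 0 := by
    have h1 : C.det = (-C).det := by rw [← hCskew, Matrix.det_transpose]
    rw [Matrix.det_neg] at h1
    rw [hcard] at hodd
    rw [hodd.neg_one_pow] at h1
    have h2 : (2 : K) * C.det = 0 := by linear_combination h1
    rcases mul_eq_zero.mp h2 with h3 | h3
    · exact absurd h3 two_ne_zero
    · exact h3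
  obtain ⟨x, hx0, hxC⟩ := Matrix.exists_mulVec_eq_zero_iff.mpr hdet
  have hxCt : x ᵥ* C = 0 := by
    have h1 : Cᵀ *ᵥ x = x ᵥ* C := Matrix.mulVec_transpose C x
    rw [← h1, hCskew, Matrix.neg_mulVec, hxC, neg_zero]
  set v : m → K := ∑ w : b, x w • (Pi.single (c w) (1:K) : m → K) with hv
  have hvdot : ∀ u : m → K, dotProduct v u = ∑ wb : b, x wb * u (c wb) := by
    intro u
    rw [hv]
    simp only [dotProduct, Finset.sum_apply, Pi.smul_apply, smul_eq_mul,
      Finset.sum_mul]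
    rw [Finset.sum_comm]
    apply Finset.sum_congr rfl
    intro wb _
    simp only [Pi.single_apply, mul_ite, ite_mul, mul_one, mul_zero, zero_mul, one_mul,
      Finset.sum_ite_eq', Finset.mem_univ, if_true]
  let φ : (m → K) →ₗ[K] K :=
    { toFun := fun u => dotProduct v u
      map_add' := fun u1 u2 => dotProduct_add v u1 u2
      map_smul' := fun a u => by
        simp only [dotProduct_smul, smul_eq_mul, RingHom.id_apply] }
  have hφb : ∀ u ∈ b, φ u = 0 := by
    intro u hu
    have h1 : φ u = ∑ wb : b, x wb * u (c wb) := hvdot u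
    have h2 : ∀ wb : b, u (c wb) = C wb ⟨u, hu⟩ := by
      intro wb
      have h3 : (((⟨u, hu⟩ : b) : m → K)) (c wb) = u (c wb) := rfl
      rw [← h3, ← hcc ⟨u, hu⟩]
      rfl
    have h4 : φ u = (x ᵥ* C) ⟨u, hu⟩ := by
      rw [h1]
      simp only [Matrix.vecMul, dotProduct]
      congr 1
      funext wb
      rw [h2 wb]
    rw [h4, hxCt]
    rfl
  have hφspan : ∀ u ∈ Submodule.span K (Set.range Bᵀ), φ u = 0 := by
    intro u hu
    rw [← hbspan] at hu
    have : Submodule.span K b ≤ LinearMap.ker φ := by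
      rw [Submodule.span_le]
      intro z hz
      exact hφb z hz
    exact this hu
  have hvB : v ᵥ* B = 0 := by
    funext jj
    have h1 : (v ᵥ* B) jj = φ (Bᵀ jj) := by
      simp only [Matrix.vecMul, dotProduct]
      rfl
    rw [h1]
    exact hφspan _ (Submodule.subset_span ⟨jj, rfl⟩)
  have hBv : B *ᵥ v = 0 := by
    have h1 : Bᵀ *ᵥ v = v ᵥ* B := Matrix.mulVec_transpose B v
    rw [h, Matrix.neg_mulVec, hvB] at h1
    exact neg_eq_zero.mp h1
  have hsum : ∑ wb : b, x wb • ((wb : m → K)) = 0 := by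
    have h1 : B *ᵥ v = ∑ wb : b, x wb • ((wb : m → K)) := by
      have h2 : B *ᵥ v = B.mulVecLin v := rfl
      rw [h2, hv, map_sum]
      congr 1
      funext wb
      rw [_root_.map_smul]
      congr 1
      show B *ᵥ Pi.single (c wb) 1 = _
      rw [Matrix.mulVec_single_one]
      exact hcc wb
    rw [← h1, hBv]
  have hzero := Fintype.linearIndependent_iff.mp hbli x hsum
  apply hx0
  funext wb
  exact hzero wb
end S3

section S4

theorem sum_sub_succ {k : ℕ} (lam : Fin k → ℕ) (j : ℕ) :
    ∑ r, (lam r - j) = (∑ r, (lam r - (j + 1)))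
      + (Finset.univ.filter fun r => j < lam r).card := by
  classical
  rw [Finset.card_filter, ← Finset.sum_add_distrib]
  apply Finset.sum_congr rfl
  intro r _
  split_ifs <;> omega

theorem mult_split {k : ℕ} (lam : Fin k → ℕ) (j : ℕ) :
    (Finset.univ.filter fun r => j < lam r).card
      = (Finset.univ.filter fun r => j + 1 < lam r).card
        + (Finset.univ.filter fun r => lam r = j + 1).card := by
  classical
  rw [Finset.card_filter, Finset.card_filter, Finset.card_filter, ← Finset.sum_add_distrib]
  apply Finset.sum_congr rfl
  intro r _
  split_ifs <;> omega

theorem card_filter_Ico_le (P : ℕ → Prop) [DecidablePred P] (a b : ℕ) :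
    ((Finset.Ico a b).filter P).card
      ≤ (if P a then 1 else 0) + ((Finset.Ico (a + 1) b).filter P).card := by
  split_ifs with hPa
  · have hsub : (Finset.Ico a b).filter P ⊆ insert a ((Finset.Ico (a + 1) b).filter P) := by
      intro t ht
      simp only [Finset.mem_filter, Finset.mem_Ico] at ht
      simp only [Finset.mem_insert, Finset.mem_filter, Finset.mem_Ico]
      by_cases hta : t = a
      · exact Or.inl hta
      · exact Or.inr ⟨⟨by omega, ht.1.2⟩, ht.2⟩
    calc ((Finset.Ico a b).filter P).card
        ≤ (insert a ((Finset.Ico (a + 1) b).filter P)).card := Finset.card_le_card hsub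
      _ ≤ 1 + ((Finset.Ico (a + 1) b).filter P).card := by
          have := Finset.card_insert_le a ((Finset.Ico (a + 1) b).filter P); omega
  · apply le_trans _ (Nat.le_add_left _ _)
    apply Finset.card_le_card
    intro t ht
    simp only [Finset.mem_filter, Finset.mem_Ico] at ht ⊢
    refine ⟨⟨?_, ht.1.2⟩, ht.2⟩
    rcases Nat.eq_or_lt_of_le ht.1.1 with h | h
    · exact absurd (h ▸ ht.2) hPa
    · omega

theorem deg_eq {n k : ℕ} (lam : Fin k → ℕ) (hpos : ∀ r, 1 ≤ lam r)
    (hn : ∑ r, lam r = n) :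
    degeneracy lam = ((Finset.range n).filter fun t =>
      Odd t ∧ Odd ((Finset.univ.filter fun r => lam r = t + 1)).card).card := by
  classical
  symm
  apply Finset.card_bij (fun j _ => j + 1)
  · intro j hj
    simp only [Finset.mem_filter, Finset.mem_range] at hj
    obtain ⟨hjn, hodd, hmult⟩ := hj
    have hne : ∃ r, lam r = j + 1 := by
      have h0 : ((Finset.univ.filter fun r => lam r = j + 1)).card ≠ 0 := by
        intro h; rw [h] at hmult; simp at hmult
      obtain ⟨r, hr⟩ := Finset.card_pos.mp (Nat.pos_of_ne_zero h0)
      exact ⟨r, (Finset.mem_filter.mp hr).2⟩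
    obtain ⟨r, hr⟩ := hne
    simp only [degeneracy, Finset.mem_filter, Finset.mem_image, Finset.mem_univ, true_and]
    refine ⟨⟨r, hr⟩, ?_, hmult⟩
    rcases hodd with ⟨t, ht⟩
    exact ⟨t + 1, by omega⟩
  · intro a _ b _ hab
    omega
  · intro v hv
    simp only [degeneracy, Finset.mem_filter, Finset.mem_image, Finset.mem_univ, true_and] at hv
    obtain ⟨⟨r, hr⟩, heven, hmult⟩ := hv
    have hv1 : 1 ≤ v := hr ▸ hpos r
    have hvn : v ≤ n := by
      rw [← hn, ← hr]
      exact Finset.single_le_sum (fun i _ => Nat.zero_le _) (Finset.mem_univ r)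
    refine ⟨v - 1, ?_, by omega⟩
    simp only [Finset.mem_filter, Finset.mem_range]
    have hveq : v - 1 + 1 = v := by omega
    refine ⟨by omega, ?_, by rw [hveq]; exact hmult⟩
    rcases heven with ⟨t, ht⟩
    exact ⟨t - 1, by omega⟩
end S4

/-- Every symmetric matrix `A` with `N_λ * A + A * N_λᵀ = 0` has rank at most `n - d(λ)`. -/
theorem jordan_fixed_rank_le (K : Type*) [Field K] [CharZero K] (n k : ℕ)
    (lam : Fin k → ℕ) (hpos : ∀ r, 1 ≤ lam r) (hmono : Antitone lam)
    (hn : ∑ r, lam r = n) (A : Matrix (Fin n) (Fin n) K) (hA : A.IsSymm)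
    (hfix : jordanNilpotent K n k lam * A + A * (jordanNilpotent K n k lam)ᵀ = 0) :
    A.rank ≤ n - degeneracy lam := by
  classical
  set N := jordanNilpotent K n k lam with hNdef
  have hNA : N * A = -(A * Nᵀ) := eq_neg_of_add_eq_zero_left hfix
  -- power commutation
  have hpow : ∀ j : ℕ, N ^ j * A = ((-1 : K) ^ j) • (A * (Nᵀ) ^ j) := by
    intro j
    induction j with
    | zero => simp
    | succ j ih =>
      have h1 : N * (A * (Nᵀ) ^ j) = -(A * (Nᵀ) ^ (j + 1)) := by
        rw [← mul_assoc, hNA, neg_mul, mul_assoc, ← pow_succ']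
      rw [pow_succ', mul_assoc, ih, Matrix.mul_smul, h1, smul_neg, ← neg_smul]
      congr 1
      rw [pow_succ]
      ring
  -- skewness for odd powers
  have hskew : ∀ j : ℕ, Odd j → (N ^ j * A)ᵀ = -(N ^ j * A) := by
    intro j hj
    have h1 : (N ^ j * A)ᵀ = A * (Nᵀ) ^ j := by
      rw [Matrix.transpose_mul, ← Matrix.transpose_pow, hA.eq]
    have h2 := hpow j
    rw [hj.neg_one_pow, neg_one_smul] at h2
    rw [h1]
    rw [h2, neg_neg]
  have heven : ∀ j : ℕ, Odd j → Even ((N ^ j * A).rank) :=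
    fun j hj => even_rank_of_skew _ (hskew j hj)
  -- rank of powers
  have hrankN : ∀ j : ℕ, (N ^ j).rank = ∑ r, (lam r - j) :=
    fun j => jordan_pow_rank K n k lam hn j
  -- descent step
  have hstep : ∀ j : ℕ, (N ^ j * A).rank ≤ (N ^ (j + 1) * A).rank
      + (Finset.univ.filter fun r => j < lam r).card := by
    intro j
    have hr : LinearMap.range (N ^ j * A).mulVecLin ≤ LinearMap.range (N ^ j).mulVecLin := by
      rw [Matrix.mulVecLin_mul]
      exact LinearMap.range_comp_le_range _ _
    have h1 := rank_mul_descend N (N ^ j * A) (N ^ j) hr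
    rw [← mul_assoc, ← pow_succ'] at h1
    have h2 := hrankN j
    have h3 := hrankN (j + 1)
    have h4 := sum_sub_succ lam j
    omega
  -- vanishing for large powers
  have hzero : ∀ j : ℕ, n ≤ j → 1 ≤ j → (N ^ j * A).rank = 0 := by
    intro j h1 h2
    rw [hNdef, jordan_pow_eq_zero K n k lam hn h1 h2, zero_mul, Matrix.rank_zero]
  -- the main downward induction
  have key : ∀ i j : ℕ, Odd j → n ≤ j + 2 * i →
      (N ^ j * A).rank + ((Finset.Ico j n).filter fun t =>
        Odd t ∧ Odd ((Finset.univ.filter fun r => lam r = t + 1)).card).card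
      ≤ ∑ r, (lam r - j) := by
    intro i
    induction i with
    | zero =>
      intro j hj hjn
      rw [hzero j (by omega) hj.pos]
      have he : Finset.Ico j n = ∅ := Finset.Ico_eq_empty (by omega)
      rw [he]
      simp
    | succ i ih =>
      intro j hj hjn
      by_cases hcase : n ≤ j
      · rw [hzero j hcase hj.pos]
        have he : Finset.Ico j n = ∅ := Finset.Ico_eq_empty (by omega)
        rw [he]
        simp
      · have h2 := ih (j + 2) (by
          rcases hj with ⟨t, ht⟩; exact ⟨t + 1, by omega⟩) (by omega)
        have s1 := hstep j
        have s2 : (N ^ (j + 1) * A).rank ≤ (N ^ (j + 2) * A).rank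
            + (Finset.univ.filter fun r => j + 1 < lam r).card := hstep (j + 1)
        have e1 := sum_sub_succ lam j
        have e2 : ∑ r, (lam r - (j + 1)) = (∑ r, (lam r - (j + 2)))
            + (Finset.univ.filter fun r => j + 1 < lam r).card := sum_sub_succ lam (j + 1)
        have hd1 : ((Finset.Ico j n).filter (fun t =>
              Odd t ∧ Odd ((Finset.univ.filter fun r => lam r = t + 1)).card)).card
            ≤ (if (Odd j ∧ Odd ((Finset.univ.filter fun r => lam r = j + 1)).card)
                then 1 else 0)
              + ((Finset.Ico (j + 1) n).filter (fun t =>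
              Odd t ∧ Odd ((Finset.univ.filter fun r => lam r = t + 1)).card)).card :=
          card_filter_Ico_le _ j n
        have hd2 : ((Finset.Ico (j + 1) n).filter (fun t =>
              Odd t ∧ Odd ((Finset.univ.filter fun r => lam r = t + 1)).card)).card
            ≤ (if (Odd (j + 1) ∧ Odd ((Finset.univ.filter fun r => lam r = j + 1 + 1)).card)
                then 1 else 0)
              + ((Finset.Ico (j + 2) n).filter (fun t =>
              Odd t ∧ Odd ((Finset.univ.filter fun r => lam r = t + 1)).card)).card :=
          card_filter_Ico_le _ (j + 1) n
        have hP1 : ¬ (Odd (j + 1) ∧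
            Odd ((Finset.univ.filter fun r => lam r = j + 1 + 1)).card) := by
          rintro ⟨ho, -⟩
          rcases hj with ⟨t, ht⟩
          rcases ho with ⟨t', ht'⟩
          omega
        rw [if_neg hP1] at hd2
        have hms := mult_split lam j
        by_cases hodd : Odd ((Finset.univ.filter fun r => lam r = j + 1)).card
        · rw [if_pos ⟨hj, hodd⟩] at hd1
          obtain ⟨a, ha⟩ := heven j hj
          obtain ⟨bb, hbb⟩ := heven (j + 2) (by rcases hj with ⟨t, ht⟩; exact ⟨t + 1, by omega⟩)
          obtain ⟨t, ht⟩ := hodd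
          omega
        · rw [if_neg (fun hp => hodd hp.2)] at hd1
          omega
  -- final assembly
  have k1 := key n 1 odd_one (by omega)
  have s0 : A.rank ≤ (N ^ 1 * A).rank + (Finset.univ.filter fun r => 0 < lam r).card := by
    have h := hstep 0
    rw [pow_zero, one_mul] at h
    exact h
  have e0 : ∑ r, (lam r - 0) = (∑ r, (lam r - 1))
      + (Finset.univ.filter fun r => 0 < lam r).card := sum_sub_succ lam 0
  have hRf0 : ∑ r, (lam r - 0) = n := by simpa using hn
  have hdeg : degeneracy lam = ((Finset.Ico 0 n).filter fun t =>
      Odd t ∧ Odd ((Finset.univ.filter fun r => lam r = t + 1)).card).card := by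
    rw [deg_eq lam hpos hn, Finset.range_eq_Ico]
  have hd01 : ((Finset.Ico 0 n).filter (fun t =>
        Odd t ∧ Odd ((Finset.univ.filter fun r => lam r = t + 1)).card)).card
      ≤ (if (Odd 0 ∧ Odd ((Finset.univ.filter fun r => lam r = 0 + 1)).card) then 1 else 0)
        + ((Finset.Ico 1 n).filter (fun t =>
        Odd t ∧ Odd ((Finset.univ.filter fun r => lam r = t + 1)).card)).card :=
    card_filter_Ico_le (fun t =>
      Odd t ∧ Odd ((Finset.univ.filter fun r => lam r = t + 1)).card) 0 n
  have hP0 : ¬ (Odd 0 ∧ Odd ((Finset.univ.filter fun r => lam r = 0 + 1)).card) := by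
    rintro ⟨ho, -⟩
    exact (Nat.not_odd_iff_even.mpr Even.zero) ho
  rw [if_neg hP0] at hd01
  omega
end

section
/- There exists a symmetric n×n matrix A over K satisfying N_λ·A + A·N_λᵀ = 0 with rank(A) = n − d(λ). -/
open Matrix

open Matrix

namespace JFR

attribute [local instance 10] Classical.propDecidable

variable {k : ℕ} (lam : Fin k → ℕ)

/-- `lam` extended to `ℕ` by zero. -/
def lamN (t : ℕ) : ℕ := if h : t < k then lam ⟨t, h⟩ else 0

/-- partial sums of `lamN`. -/
def psumN (r : ℕ) : ℕ := ∑ t ∈ Finset.range r, lamN lam t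

/-- number of earlier blocks with the same part. -/
def cntN (r : ℕ) : ℕ := ((Finset.range r).filter fun t => lamN lam t = lamN lam r).card

/-- block of the index `i`. -/
def blkN (i : ℕ) : ℕ := Nat.findGreatest (fun r => psumN lam r ≤ i) k

/-- position of the index `i` inside its block. -/
def posN (i : ℕ) : ℕ := i - psumN lam (blkN lam i)

/-- the involution. -/
def sigN (i : ℕ) : ℕ :=
  if Odd (lamN lam (blkN lam i)) then
    psumN lam (blkN lam i) + (lamN lam (blkN lam i) - 1 - posN lam i)
  else if Odd (cntN lam (blkN lam i)) then
    psumN lam (blkN lam i - 1) + (lamN lam (blkN lam i) - 1 - posN lam i)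
  else if lamN lam (blkN lam i + 1) = lamN lam (blkN lam i) then
    psumN lam (blkN lam i + 1) + (lamN lam (blkN lam i) - 1 - posN lam i)
  else if posN lam i = lamN lam (blkN lam i) - 1 then i
  else psumN lam (blkN lam i) + (lamN lam (blkN lam i) - 2 - posN lam i)

/-- the signs. -/
def epsN (K : Type*) [Field K] (i : ℕ) : K :=
  if Odd (lamN lam (blkN lam i)) then (-1) ^ posN lam i
  else if Odd (cntN lam (blkN lam i)) then (-1) ^ (posN lam i + 1)
  else if lamN lam (blkN lam i + 1) = lamN lam (blkN lam i) then (-1) ^ posN lam i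
  else if posN lam i = lamN lam (blkN lam i) - 1 then 0
  else (-1) ^ posN lam i

lemma lamN_fin (r : Fin k) : lamN lam (r : ℕ) = lam r := by
  simp [lamN, r.isLt]

lemma psumN_succ (r : ℕ) : psumN lam (r + 1) = psumN lam r + lamN lam r :=
  Finset.sum_range_succ _ _

lemma psumN_mono : Monotone (psumN lam) := by
  intro a b hab
  exact Finset.sum_le_sum_of_subset (Finset.range_subset_range.2 hab)

lemma psum_eq (r : Fin k) : psum lam r = psumN lam (r : ℕ) := by
  unfold psum psumN
  rw [Finset.sum_filter]
  have h1 : ∀ a : Fin k, (if a < r then lam a else 0)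
      = (fun t => if t < (r : ℕ) then lamN lam t else 0) (a : ℕ) := by
    intro a
    simp only [Fin.lt_def, lamN_fin]
  rw [Finset.sum_congr rfl (fun a _ => h1 a),
    Fin.sum_univ_eq_sum_range (fun t => if t < (r : ℕ) then lamN lam t else 0)]
  rw [show Finset.range (r:ℕ) = (Finset.range k).filter (fun t => t < (r : ℕ)) from by
    ext t; simp only [Finset.mem_range, Finset.mem_filter]; omega, Finset.sum_filter]


section Hyp

variable {n : ℕ} (hpos : ∀ r, 1 ≤ lam r) (hmono : Antitone lam)
  (hn : ∑ r, lam r = n)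

include hpos in
lemma lamN_pos {r : ℕ} (hr : r < k) : 1 ≤ lamN lam r := by
  simpa [lamN, hr] using hpos ⟨r, hr⟩

lemma lt_k_of_lamN_pos {r : ℕ} (h : 1 ≤ lamN lam r) : r < k := by
  by_contra hr
  simp [lamN, hr] at h

include hmono in
lemma lamN_anti : Antitone (lamN lam) := by
  intro a b hab
  by_cases hb : b < k
  · have ha : a < k := lt_of_le_of_lt hab hb
    simpa [lamN, ha, hb] using hmono (show (⟨a, ha⟩ : Fin k) ≤ ⟨b, hb⟩ from hab)
  · simp [lamN, hb]

include hn in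
lemma psumN_total : psumN lam k = n := by
  rw [← hn, psumN, ← Fin.sum_univ_eq_sum_range (fun t => lamN lam t)]
  exact Finset.sum_congr rfl fun a _ => lamN_fin lam a

include hn in
lemma psumN_le_n {r : ℕ} (hr : r ≤ k) : psumN lam r ≤ n :=
  (psumN_total lam hn) ▸ psumN_mono lam hr

include hn in
lemma mem_block_lt_n {r p : ℕ} (hr : r < k) (hp : p < lamN lam r) :
    psumN lam r + p < n := by
  have h1 : psumN lam r + p < psumN lam (r + 1) := by
    rw [psumN_succ]; omega
  exact lt_of_lt_of_le h1 (psumN_le_n lam hn hr)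

include hn in
lemma blk_spec {i : ℕ} (hi : i < n) :
    blkN lam i < k ∧ psumN lam (blkN lam i) ≤ i ∧
      i < psumN lam (blkN lam i) + lamN lam (blkN lam i) := by
  have h0 : Nat.findGreatest (fun r => psumN lam r ≤ i) k ≤ k := Nat.findGreatest_le k
  have hspec : psumN lam (blkN lam i) ≤ i := by
    rw [blkN]
    exact Nat.findGreatest_spec (P := fun r => psumN lam r ≤ i) (m := 0)
      (Nat.zero_le k) (by simp [psumN])
  have hlt : blkN lam i < k := by
    rcases lt_or_eq_of_le h0 with h | h
    · exact h
    · exfalso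
      have h2 := psumN_total lam hn
      have h3 := hspec
      rw [blkN, h] at h3
      omega
  refine ⟨hlt, hspec, ?_⟩
  have h4 : ¬ psumN lam (blkN lam i + 1) ≤ i := by
    rw [blkN]
    exact Nat.findGreatest_is_greatest (P := fun r => psumN lam r ≤ i)
      (Nat.lt_succ_self _) (by rw [← blkN]; omega)
  rw [psumN_succ] at h4
  omega

include hn in
lemma blk_pos_eq {r p : ℕ} (hr : r < k) (hp : p < lamN lam r) :
    blkN lam (psumN lam r + p) = r ∧ posN lam (psumN lam r + p) = p := by
  set i := psumN lam r + p with hidef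
  have hi : i < n := mem_block_lt_n lam hn hr hp
  obtain ⟨hbk, hble, hblt⟩ := blk_spec lam hn hi
  have hb : blkN lam i = r := by
    rcases lt_trichotomy (blkN lam i) r with h | h | h
    · exfalso
      have : psumN lam (blkN lam i + 1) ≤ psumN lam r := psumN_mono lam (by omega)
      rw [psumN_succ] at this
      omega
    · exact h
    · exfalso
      have : psumN lam (r + 1) ≤ psumN lam (blkN lam i) := psumN_mono lam (by omega)
      rw [psumN_succ] at this
      omega
  refine ⟨hb, ?_⟩
  rw [posN, hb, hidef]
  omega

lemma cnt_succ {r : ℕ} (h : lamN lam (r + 1) = lamN lam r) :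
    cntN lam (r + 1) = cntN lam r + 1 := by
  unfold cntN
  simp only [h]
  rw [Finset.range_add_one, Finset.filter_insert, if_pos rfl,
    Finset.card_insert_of_notMem (by simp)]

include hmono in
lemma cnt_pos_prev {r : ℕ} (h : 0 < cntN lam r) :
    0 < r ∧ lamN lam (r - 1) = lamN lam r := by
  obtain ⟨t, ht⟩ := Finset.card_pos.1 h
  simp only [Finset.mem_filter, Finset.mem_range] at ht
  have hr : 0 < r := by omega
  refine ⟨hr, le_antisymm ?_ ?_⟩
  · calc lamN lam (r - 1) ≤ lamN lam t := lamN_anti lam hmono (by omega)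
    _ = lamN lam r := ht.2
  · exact lamN_anti lam hmono (by omega)

end Hyp


lemma neg_one_pow_congr {K : Type*} [Field K] {a b : ℕ} (h : a % 2 = b % 2) :
    ((-1 : K)) ^ a = (-1) ^ b := by
  conv_lhs => rw [← Nat.div_add_mod a 2]
  conv_rhs => rw [← Nat.div_add_mod b 2]
  rw [pow_add, pow_add, pow_mul, pow_mul, neg_one_sq, one_pow, one_pow, h]

lemma neg_one_pow_ne_zero {K : Type*} [Field K] (a : ℕ) : ((-1 : K)) ^ a ≠ 0 :=
  pow_ne_zero _ (neg_ne_zero.mpr one_ne_zero)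

section Hyp2

variable {n : ℕ} (hpos : ∀ r, 1 ≤ lam r) (hmono : Antitone lam)
  (hn : ∑ r, lam r = n)

include hn in
lemma sig_eval {r p : ℕ} (hr : r < k) (hp : p < lamN lam r) :
    sigN lam (psumN lam r + p) =
      (if Odd (lamN lam r) then psumN lam r + (lamN lam r - 1 - p)
       else if Odd (cntN lam r) then psumN lam (r - 1) + (lamN lam r - 1 - p)
       else if lamN lam (r + 1) = lamN lam r then psumN lam (r + 1) + (lamN lam r - 1 - p)
       else if p = lamN lam r - 1 then psumN lam r + p
       else psumN lam r + (lamN lam r - 2 - p)) := by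
  obtain ⟨hb, hq⟩ := blk_pos_eq lam hn hr hp
  unfold sigN
  rw [hb, hq]

include hn in
lemma eps_eval (K : Type*) [Field K] {r p : ℕ} (hr : r < k) (hp : p < lamN lam r) :
    epsN lam K (psumN lam r + p) =
      (if Odd (lamN lam r) then (-1) ^ p
       else if Odd (cntN lam r) then (-1) ^ (p + 1)
       else if lamN lam (r + 1) = lamN lam r then (-1) ^ p
       else if p = lamN lam r - 1 then 0
       else (-1) ^ p) := by
  obtain ⟨hb, hq⟩ := blk_pos_eq lam hn hr hp
  unfold epsN
  rw [hb, hq]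

include hpos in
lemma pair_next (hr : r < k) (hnx : lamN lam (r + 1) = lamN lam r) :
    r + 1 < k ∧ cntN lam (r + 1) = cntN lam r + 1 ∧
      psumN lam (r + 1) = psumN lam r + lamN lam r := by
  refine ⟨?_, cnt_succ lam hnx, psumN_succ lam r⟩
  exact lt_k_of_lamN_pos lam (by rw [hnx]; exact lamN_pos lam hpos hr)

include hmono in
lemma pair_prev (hr : r < k) (hc : Odd (cntN lam r)) :
    0 < r ∧ lamN lam (r - 1) = lamN lam r ∧ cntN lam (r - 1) + 1 = cntN lam r ∧
      lamN lam (r - 1 + 1) = lamN lam (r - 1) ∧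
      psumN lam r = psumN lam (r - 1) + lamN lam r := by
  obtain ⟨hr0, hlm⟩ := cnt_pos_prev lam hmono (r := r) (by
    rcases hc with ⟨t, ht⟩; omega)
  have hr1 : r - 1 + 1 = r := by omega
  have hnx : lamN lam (r - 1 + 1) = lamN lam (r - 1) := by rw [hr1, hlm]
  have hcnt := cnt_succ lam hnx
  rw [hr1] at hcnt
  refine ⟨hr0, hlm, hcnt.symm, hnx, ?_⟩
  have := psumN_succ lam (r - 1)
  rw [hr1, hlm] at this
  exact this

end Hyp2


section Hyp3

variable {n : ℕ} (hpos : ∀ r, 1 ≤ lam r) (hmono : Antitone lam)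
  (hn : ∑ r, lam r = n)

include hpos hmono hn in
lemma sig_invol (K : Type*) [Field K] {r p : ℕ} (hr : r < k) (hp : p < lamN lam r) :
    (∃ r' q, r' < k ∧ q < lamN lam r' ∧
        sigN lam (psumN lam r + p) = psumN lam r' + q) ∧
    sigN lam (sigN lam (psumN lam r + p)) = psumN lam r + p ∧
    epsN lam K (sigN lam (psumN lam r + p)) = epsN lam K (psumN lam r + p) := by
  have hm1 : 1 ≤ lamN lam r := lamN_pos lam hpos hr
  rcases (Nat.even_or_odd (lamN lam r)).symm with hm | hm
  · -- odd block, self-paired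
    have hmod : lamN lam r % 2 = 1 := Nat.odd_iff.mp hm
    have hq : lamN lam r - 1 - p < lamN lam r := by omega
    have e1 : sigN lam (psumN lam r + p) = psumN lam r + (lamN lam r - 1 - p) := by
      rw [sig_eval lam hn hr hp, if_pos hm]
    have e2 : sigN lam (psumN lam r + (lamN lam r - 1 - p)) =
        psumN lam r + (lamN lam r - 1 - (lamN lam r - 1 - p)) := by
      rw [sig_eval lam hn hr hq, if_pos hm]
    have e3 : epsN lam K (psumN lam r + (lamN lam r - 1 - p)) =
        (-1) ^ (lamN lam r - 1 - p) := by
      rw [eps_eval lam hn K hr hq, if_pos hm]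
    have e4 : epsN lam K (psumN lam r + p) = (-1) ^ p := by
      rw [eps_eval lam hn K hr hp, if_pos hm]
    refine ⟨⟨r, _, hr, hq, e1⟩, ?_, ?_⟩
    · rw [e1, e2]; omega
    · rw [e1, e3, e4]; exact neg_one_pow_congr (by omega)
  · have hmod : lamN lam r % 2 = 0 := Nat.even_iff.mp hm
    have hm' : ¬ Odd (lamN lam r) := Nat.not_odd_iff_even.mpr hm
    rcases (Nat.even_or_odd (cntN lam r)).symm with hc | hc
    · -- paired with previous block
      obtain ⟨hr0, hlm, hcnt, hnx, hps⟩ := pair_prev lam hmono hr hc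
      have hcmod : cntN lam r % 2 = 1 := Nat.odd_iff.mp hc
      have hrm1 : r - 1 < k := by omega
      have hq : lamN lam r - 1 - p < lamN lam (r - 1) := by rw [hlm]; omega
      have hm2' : ¬ Odd (lamN lam (r - 1)) := by rw [hlm]; exact hm'
      have hc2' : ¬ Odd (cntN lam (r - 1)) := by
        rw [Nat.odd_iff]; omega
      have e1 : sigN lam (psumN lam r + p) =
          psumN lam (r - 1) + (lamN lam r - 1 - p) := by
        rw [sig_eval lam hn hr hp, if_neg hm', if_pos hc]
      have e2 : sigN lam (psumN lam (r - 1) + (lamN lam r - 1 - p)) =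
          psumN lam (r - 1 + 1) + (lamN lam (r - 1) - 1 - (lamN lam r - 1 - p)) := by
        rw [sig_eval lam hn hrm1 hq, if_neg hm2', if_neg hc2', if_pos hnx]
      have e3 : epsN lam K (psumN lam (r - 1) + (lamN lam r - 1 - p)) =
          (-1) ^ (lamN lam r - 1 - p) := by
        rw [eps_eval lam hn K hrm1 hq, if_neg hm2', if_neg hc2', if_pos hnx]
      have e4 : epsN lam K (psumN lam r + p) = (-1) ^ (p + 1) := by
        rw [eps_eval lam hn K hr hp, if_neg hm', if_pos hc]
      have hr1 : r - 1 + 1 = r := by omega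
      refine ⟨⟨r - 1, _, hrm1, hq, e1⟩, ?_, ?_⟩
      · rw [e1, e2, hr1, hlm]; omega
      · rw [e1, e3, e4]; exact neg_one_pow_congr (by omega)
    · have hcmod : cntN lam r % 2 = 0 := Nat.even_iff.mp hc
      have hc' : ¬ Odd (cntN lam r) := Nat.not_odd_iff_even.mpr hc
      by_cases hnx : lamN lam (r + 1) = lamN lam r
      · -- paired with next block
        obtain ⟨hk1, hcnt, hps⟩ := pair_next lam hpos hr hnx
        have hq : lamN lam r - 1 - p < lamN lam (r + 1) := by rw [hnx]; omega
        have hm2' : ¬ Odd (lamN lam (r + 1)) := by rw [hnx]; exact hm'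
        have hc2 : Odd (cntN lam (r + 1)) := by rw [Nat.odd_iff]; omega
        have e1 : sigN lam (psumN lam r + p) =
            psumN lam (r + 1) + (lamN lam r - 1 - p) := by
          rw [sig_eval lam hn hr hp, if_neg hm', if_neg hc', if_pos hnx]
        have e2 : sigN lam (psumN lam (r + 1) + (lamN lam r - 1 - p)) =
            psumN lam (r + 1 - 1) + (lamN lam (r + 1) - 1 - (lamN lam r - 1 - p)) := by
          rw [sig_eval lam hn hk1 hq, if_neg hm2', if_pos hc2]
        have e3 : epsN lam K (psumN lam (r + 1) + (lamN lam r - 1 - p)) =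
            (-1) ^ (lamN lam r - 1 - p + 1) := by
          rw [eps_eval lam hn K hk1 hq, if_neg hm2', if_pos hc2]
        have e4 : epsN lam K (psumN lam r + p) = (-1) ^ p := by
          rw [eps_eval lam hn K hr hp, if_neg hm', if_neg hc', if_pos hnx]
        have hr1 : r + 1 - 1 = r := by omega
        refine ⟨⟨r + 1, _, hk1, hq, e1⟩, ?_, ?_⟩
        · rw [e1, e2, hr1, hnx]; omega
        · rw [e1, e3, e4]; exact neg_one_pow_congr (by omega)
      · -- leftover block
        by_cases hpp : p = lamN lam r - 1
        · have e1 : sigN lam (psumN lam r + p) = psumN lam r + p := by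
            rw [sig_eval lam hn hr hp, if_neg hm', if_neg hc', if_neg hnx, if_pos hpp]
          exact ⟨⟨r, p, hr, hp, e1⟩, by rw [e1, e1], by rw [e1]⟩
        · have hq : lamN lam r - 2 - p < lamN lam r := by omega
          have hq' : ¬ (lamN lam r - 2 - p = lamN lam r - 1) := by omega
          have e1 : sigN lam (psumN lam r + p) =
              psumN lam r + (lamN lam r - 2 - p) := by
            rw [sig_eval lam hn hr hp, if_neg hm', if_neg hc', if_neg hnx, if_neg hpp]
          have e2 : sigN lam (psumN lam r + (lamN lam r - 2 - p)) =
              psumN lam r + (lamN lam r - 2 - (lamN lam r - 2 - p)) := by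
            rw [sig_eval lam hn hr hq, if_neg hm', if_neg hc', if_neg hnx, if_neg hq']
          have e3 : epsN lam K (psumN lam r + (lamN lam r - 2 - p)) =
              (-1) ^ (lamN lam r - 2 - p) := by
            rw [eps_eval lam hn K hr hq, if_neg hm', if_neg hc', if_neg hnx, if_neg hq']
          have e4 : epsN lam K (psumN lam r + p) = (-1) ^ p := by
            rw [eps_eval lam hn K hr hp, if_neg hm', if_neg hc', if_neg hnx, if_neg hpp]
          refine ⟨⟨r, _, hr, hq, e1⟩, ?_, ?_⟩
          · rw [e1, e2]; omega
          · rw [e1, e3, e4]; exact neg_one_pow_congr (by omega)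

include hpos hmono hn in
lemma sig_step (K : Type*) [Field K] {r p : ℕ} (hr : r < k) (hp2 : p + 2 ≤ lamN lam r)
    (hne : epsN lam K (psumN lam r + (p + 1)) ≠ 0) :
    sigN lam (psumN lam r + p) = sigN lam (psumN lam r + (p + 1)) + 1 ∧
    epsN lam K (psumN lam r + (p + 1)) = - epsN lam K (psumN lam r + p) ∧
    ∃ r' q, r' < k ∧ q + 2 ≤ lamN lam r' ∧
      sigN lam (psumN lam r + (p + 1)) = psumN lam r' + q := by
  have hp : p < lamN lam r := by omega
  have hp1 : p + 1 < lamN lam r := by omega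
  have neg_step : ∀ a : ℕ, ((-1 : K)) ^ (a + 1) = - (-1) ^ a := by
    intro a; rw [pow_succ]; ring
  rcases (Nat.even_or_odd (lamN lam r)).symm with hm | hm
  · have hmod : lamN lam r % 2 = 1 := Nat.odd_iff.mp hm
    have e1 : sigN lam (psumN lam r + p) = psumN lam r + (lamN lam r - 1 - p) := by
      rw [sig_eval lam hn hr hp, if_pos hm]
    have e2 : sigN lam (psumN lam r + (p + 1)) =
        psumN lam r + (lamN lam r - 1 - (p + 1)) := by
      rw [sig_eval lam hn hr hp1, if_pos hm]
    have e3 : epsN lam K (psumN lam r + (p + 1)) = (-1) ^ (p + 1) := by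
      rw [eps_eval lam hn K hr hp1, if_pos hm]
    have e4 : epsN lam K (psumN lam r + p) = (-1) ^ p := by
      rw [eps_eval lam hn K hr hp, if_pos hm]
    refine ⟨by rw [e1, e2]; omega, by rw [e3, e4]; exact neg_step p,
      ⟨r, _, hr, by omega, e2⟩⟩
  · have hmod : lamN lam r % 2 = 0 := Nat.even_iff.mp hm
    have hm' : ¬ Odd (lamN lam r) := Nat.not_odd_iff_even.mpr hm
    rcases (Nat.even_or_odd (cntN lam r)).symm with hc | hc
    · obtain ⟨hr0, hlm, hcnt, hnx, hps⟩ := pair_prev lam hmono hr hc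
      have hrm1 : r - 1 < k := by omega
      have e1 : sigN lam (psumN lam r + p) =
          psumN lam (r - 1) + (lamN lam r - 1 - p) := by
        rw [sig_eval lam hn hr hp, if_neg hm', if_pos hc]
      have e2 : sigN lam (psumN lam r + (p + 1)) =
          psumN lam (r - 1) + (lamN lam r - 1 - (p + 1)) := by
        rw [sig_eval lam hn hr hp1, if_neg hm', if_pos hc]
      have e3 : epsN lam K (psumN lam r + (p + 1)) = (-1) ^ (p + 1 + 1) := by
        rw [eps_eval lam hn K hr hp1, if_neg hm', if_pos hc]
      have e4 : epsN lam K (psumN lam r + p) = (-1) ^ (p + 1) := by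
        rw [eps_eval lam hn K hr hp, if_neg hm', if_pos hc]
      refine ⟨by rw [e1, e2]; omega, by rw [e3, e4]; exact neg_step (p + 1),
        ⟨r - 1, _, hrm1, by rw [hlm]; omega, e2⟩⟩
    · have hc' : ¬ Odd (cntN lam r) := Nat.not_odd_iff_even.mpr hc
      by_cases hnx : lamN lam (r + 1) = lamN lam r
      · obtain ⟨hk1, hcnt, hps⟩ := pair_next lam hpos hr hnx
        have e1 : sigN lam (psumN lam r + p) =
            psumN lam (r + 1) + (lamN lam r - 1 - p) := by
          rw [sig_eval lam hn hr hp, if_neg hm', if_neg hc', if_pos hnx]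
        have e2 : sigN lam (psumN lam r + (p + 1)) =
            psumN lam (r + 1) + (lamN lam r - 1 - (p + 1)) := by
          rw [sig_eval lam hn hr hp1, if_neg hm', if_neg hc', if_pos hnx]
        have e3 : epsN lam K (psumN lam r + (p + 1)) = (-1) ^ (p + 1) := by
          rw [eps_eval lam hn K hr hp1, if_neg hm', if_neg hc', if_pos hnx]
        have e4 : epsN lam K (psumN lam r + p) = (-1) ^ p := by
          rw [eps_eval lam hn K hr hp, if_neg hm', if_neg hc', if_pos hnx]
        refine ⟨by rw [e1, e2]; omega, by rw [e3, e4]; exact neg_step p,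
          ⟨r + 1, _, hk1, by rw [hnx]; omega, e2⟩⟩
      · have hpp1 : ¬ (p + 1 = lamN lam r - 1) := by
          intro h
          apply hne
          rw [eps_eval lam hn K hr hp1, if_neg hm', if_neg hc', if_neg hnx, if_pos h]
        have hpp : ¬ (p = lamN lam r - 1) := by omega
        have e1 : sigN lam (psumN lam r + p) =
            psumN lam r + (lamN lam r - 2 - p) := by
          rw [sig_eval lam hn hr hp, if_neg hm', if_neg hc', if_neg hnx, if_neg hpp]
        have e2 : sigN lam (psumN lam r + (p + 1)) =
            psumN lam r + (lamN lam r - 2 - (p + 1)) := by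
          rw [sig_eval lam hn hr hp1, if_neg hm', if_neg hc', if_neg hnx, if_neg hpp1]
        have e3 : epsN lam K (psumN lam r + (p + 1)) = (-1) ^ (p + 1) := by
          rw [eps_eval lam hn K hr hp1, if_neg hm', if_neg hc', if_neg hnx, if_neg hpp1]
        have e4 : epsN lam K (psumN lam r + p) = (-1) ^ p := by
          rw [eps_eval lam hn K hr hp, if_neg hm', if_neg hc', if_neg hnx, if_neg hpp]
        refine ⟨by rw [e1, e2]; omega, by rw [e3, e4]; exact neg_step p,
          ⟨r, _, hr, by omega, e2⟩⟩

end Hyp3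


section Hyp4

variable {n : ℕ} (hpos : ∀ r, 1 ≤ lam r) (hmono : Antitone lam)
  (hn : ∑ r, lam r = n)

include hn in
lemma fin_rep (i : Fin n) :
    blkN lam i < k ∧ posN lam i < lamN lam (blkN lam i) ∧
      (i : ℕ) = psumN lam (blkN lam i) + posN lam i := by
  obtain ⟨h1, h2, h3⟩ := blk_spec lam hn i.isLt
  exact ⟨h1, by unfold posN; omega, by unfold posN; omega⟩

include hpos hmono hn in
lemma sig_lt_n (i : Fin n) : sigN lam (i : ℕ) < n := by
  obtain ⟨h1, h2, h3⟩ := fin_rep lam hn i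
  obtain ⟨⟨r', q, hr', hq, he⟩, -, -⟩ := sig_invol lam hpos hmono hn ℚ h1 h2
  rw [h3, he]
  exact mem_block_lt_n lam hn hr' hq

include hpos hmono hn in
lemma sig_sig (i : Fin n) : sigN lam (sigN lam (i : ℕ)) = (i : ℕ) := by
  obtain ⟨h1, h2, h3⟩ := fin_rep lam hn i
  obtain ⟨-, he, -⟩ := sig_invol lam hpos hmono hn ℚ h1 h2
  rw [h3, he]

include hpos hmono hn in
lemma eps_sig (K : Type*) [Field K] (i : Fin n) :
    epsN lam K (sigN lam (i : ℕ)) = epsN lam K (i : ℕ) := by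
  obtain ⟨h1, h2, h3⟩ := fin_rep lam hn i
  obtain ⟨-, -, he⟩ := sig_invol lam hpos hmono hn K h1 h2
  rw [h3, he]

include hn in
lemma eps_zero_iff (K : Type*) [Field K] {r p : ℕ} (hr : r < k) (hp : p < lamN lam r) :
    epsN lam K (psumN lam r + p) = 0 ↔
      (¬ Odd (lamN lam r) ∧ ¬ Odd (cntN lam r) ∧ lamN lam (r + 1) ≠ lamN lam r ∧
        p = lamN lam r - 1) := by
  rw [eps_eval lam hn K hr hp]
  split_ifs with h1 h2 h3 h4
  · simp [neg_one_pow_ne_zero, h1]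
  · simp [neg_one_pow_ne_zero, h2]
  · simp [neg_one_pow_ne_zero, h3]
  · simp [h1, h2, h3, h4]
  · simp [neg_one_pow_ne_zero, h4]

include hpos hmono in
lemma mult_eq {r : Fin k} (hne : lamN lam ((r : ℕ) + 1) ≠ lamN lam (r : ℕ)) :
    (Finset.univ.filter fun r' : Fin k => lam r' = lam r).card = cntN lam (r : ℕ) + 1 := by
  have hcard : (Finset.univ.filter fun r' : Fin k => lam r' = lam r).card =
      ((Finset.range k).filter fun t => lamN lam t = lamN lam (r : ℕ)).card := by
    apply Finset.card_bij (fun (a : Fin k) _ => (a : ℕ))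
    · intro a ha
      simp only [Finset.mem_filter, Finset.mem_univ, true_and] at ha
      simp only [Finset.mem_filter, Finset.mem_range, a.isLt, true_and, lamN_fin, ha,
        lamN_fin lam r]
    · intro a _ b _ hab
      exact Fin.ext hab
    · intro t ht
      simp only [Finset.mem_filter, Finset.mem_range] at ht
      refine ⟨⟨t, ht.1⟩, ?_, rfl⟩
      simp only [Finset.mem_filter, Finset.mem_univ, true_and]
      have e1 : lamN lam t = lam ⟨t, ht.1⟩ := by simp [lamN, ht.1]
      have e2 : lamN lam (r : ℕ) = lam r := lamN_fin lam r
      have e3 := ht.2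
      omega
  rw [hcard]
  have hset : (Finset.range k).filter (fun t => lamN lam t = lamN lam (r : ℕ)) =
      insert (r : ℕ) ((Finset.range (r : ℕ)).filter
        fun t => lamN lam t = lamN lam (r : ℕ)) := by
    ext t
    simp only [Finset.mem_filter, Finset.mem_range, Finset.mem_insert]
    constructor
    · rintro ⟨htk, hteq⟩
      rcases lt_trichotomy t (r : ℕ) with h | h | h
      · exact Or.inr ⟨h, hteq⟩
      · exact Or.inl h
      · exfalso
        apply hne
        have h1 : lamN lam ((r : ℕ) + 1) ≤ lamN lam (r : ℕ) :=
          lamN_anti lam hmono (by omega)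
        have h2 : lamN lam t ≤ lamN lam ((r : ℕ) + 1) :=
          lamN_anti lam hmono (by omega)
        omega
    · rintro (h | ⟨h, hteq⟩)
      · exact ⟨h ▸ r.isLt, h ▸ rfl⟩
      · exact ⟨lt_trans h r.isLt, hteq⟩
  rw [hset, Finset.card_insert_of_notMem (by simp), cntN]

include hpos hmono in
lemma leftover_card :
    (Finset.univ.filter fun r : Fin k => ¬ Odd (lamN lam (r : ℕ)) ∧
        ¬ Odd (cntN lam (r : ℕ)) ∧ lamN lam ((r : ℕ) + 1) ≠ lamN lam (r : ℕ)).card =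
      degeneracy lam := by
  unfold degeneracy
  apply Finset.card_bij (fun (r : Fin k) _ => lam r)
  · intro r hr
    simp only [Finset.mem_filter, Finset.mem_univ, true_and] at hr ⊢
    obtain ⟨h1, h2, h3⟩ := hr
    refine ⟨Finset.mem_image_of_mem lam (Finset.mem_univ r), ?_, ?_⟩
    · rw [← lamN_fin lam r]
      exact Nat.not_odd_iff_even.mp h1
    · rw [mult_eq lam hpos hmono h3, Nat.odd_iff]
      rw [Nat.odd_iff] at h2
      omega
  · intro a ha b hb hab
    simp only [Finset.mem_filter, Finset.mem_univ, true_and] at ha hb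
    by_contra hne2
    rcases lt_trichotomy ((a : ℕ)) ((b : ℕ)) with h | h | h
    · apply ha.2.2
      have h1 : lamN lam ((a : ℕ) + 1) ≤ lamN lam (a : ℕ) := lamN_anti lam hmono (by omega)
      have h2 : lamN lam (b : ℕ) ≤ lamN lam ((a : ℕ) + 1) := lamN_anti lam hmono (by omega)
      have h3 : lamN lam (b : ℕ) = lamN lam (a : ℕ) := by
        rw [lamN_fin, lamN_fin, hab]
      omega
    · exact hne2 (Fin.ext h)
    · apply hb.2.2
      have h1 : lamN lam ((b : ℕ) + 1) ≤ lamN lam (b : ℕ) := lamN_anti lam hmono (by omega)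
      have h2 : lamN lam (a : ℕ) ≤ lamN lam ((b : ℕ) + 1) := lamN_anti lam hmono (by omega)
      have h3 : lamN lam (a : ℕ) = lamN lam (b : ℕ) := by
        rw [lamN_fin, lamN_fin, hab]
      omega
  · intro m hm
    simp only [Finset.mem_filter, Finset.mem_image, Finset.mem_univ, true_and] at hm
    obtain ⟨⟨r0, hr0⟩, hev, hodd⟩ := hm
    have hSne : (Finset.univ.filter fun r' : Fin k => lam r' = m).Nonempty :=
      ⟨r0, by simp [hr0]⟩
    set r := (Finset.univ.filter fun r' : Fin k => lam r' = m).max' hSne with hrdef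
    have hrmem := (Finset.univ.filter fun r' : Fin k => lam r' = m).max'_mem hSne
    simp only [Finset.mem_filter, Finset.mem_univ, true_and] at hrmem
    have hne : lamN lam ((r : ℕ) + 1) ≠ lamN lam (r : ℕ) := by
      rw [lamN_fin lam r, hrmem]
      by_cases hk1 : (r : ℕ) + 1 < k
      · intro hcon
        have hmem2 : (⟨(r : ℕ) + 1, hk1⟩ : Fin k) ∈
            Finset.univ.filter fun r' : Fin k => lam r' = m := by
          simp only [Finset.mem_filter, Finset.mem_univ, true_and]
          rw [← lamN_fin lam ⟨(r : ℕ) + 1, hk1⟩] at *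
          exact hcon
        have := Finset.le_max' _ _ hmem2
        rw [← hrdef] at this
        have : ((⟨(r : ℕ) + 1, hk1⟩ : Fin k) : ℕ) ≤ (r : ℕ) := this
        simp at this
      · have : lamN lam ((r : ℕ) + 1) = 0 := by simp [lamN]; omega
        rw [this]
        have := hpos r0
        omega
    refine ⟨r, ?_, hrmem⟩
    simp only [Finset.mem_filter, Finset.mem_univ, true_and]
    have hmult := mult_eq lam hpos hmono hne
    rw [hrmem] at hmult
    refine ⟨?_, ?_, hne⟩
    · rw [lamN_fin lam r, hrmem]
      exact Nat.not_odd_iff_even.mpr hev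
    · rw [hmult, Nat.odd_iff] at hodd
      rw [Nat.odd_iff]
      omega

end Hyp4


section Final

variable {n : ℕ} (K : Type*) [Field K] (hpos : ∀ r, 1 ≤ lam r) (hmono : Antitone lam)
  (hn : ∑ r, lam r = n)

/-- the candidate matrix. -/
def AM : Matrix (Fin n) (Fin n) K :=
  Matrix.of fun i j => if (j : ℕ) = sigN lam (i : ℕ) then epsN lam K (i : ℕ) else 0

/-- indices having a successor within their block. -/
def goodIdx (i : ℕ) : Prop :=
  ∃ r q, r < k ∧ q + 2 ≤ lamN lam r ∧ i = psumN lam r + q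

include hn in
lemma pex_iff (i : Fin n) :
    (∃ r : Fin k, psum lam r ≤ (i : ℕ) ∧ (i : ℕ) + 2 ≤ psum lam r + lam r) ↔
      goodIdx lam (i : ℕ) := by
  constructor
  · rintro ⟨r, h1, h2⟩
    rw [psum_eq] at h1 h2
    rw [← lamN_fin lam r] at h2
    exact ⟨(r : ℕ), (i : ℕ) - psumN lam (r : ℕ), r.isLt, by omega, by omega⟩
  · rintro ⟨r, q, hr, hq, he⟩
    refine ⟨⟨r, hr⟩, ?_, ?_⟩
    · rw [psum_eq]
      simp only [Fin.val_mk]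
      omega
    · rw [psum_eq, ← lamN_fin lam ⟨r, hr⟩]
      simp only [Fin.val_mk]
      omega

include hn in
lemma good_succ_lt {i : ℕ} (h : goodIdx lam i) : i + 1 < n := by
  obtain ⟨r, q, hr, hq, he⟩ := h
  have := mem_block_lt_n lam hn hr (p := q + 1) (by omega)
  omega

include hn in
lemma NA_apply (M : Matrix (Fin n) (Fin n) K) (i j : Fin n) :
    (jordanNilpotent K n k lam * M) i j =
      if h : goodIdx lam (i : ℕ) then M ⟨(i : ℕ) + 1, good_succ_lt lam hn h⟩ j
      else 0 := by
  rw [Matrix.mul_apply]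
  unfold jordanNilpotent
  split_ifs with h
  · have hPex := (pex_iff lam hn i).mpr h
    rw [Finset.sum_eq_single (⟨(i : ℕ) + 1, good_succ_lt lam hn h⟩ : Fin n)]
    · rw [Matrix.of_apply, if_pos ⟨rfl, hPex⟩, one_mul]
    · intro b _ hb
      rw [Matrix.of_apply, if_neg, zero_mul]
      rintro ⟨hb1, -⟩
      exact hb (Fin.ext hb1)
    · intro hmem
      exact absurd (Finset.mem_univ _) hmem
  · apply Finset.sum_eq_zero
    intro b _
    rw [Matrix.of_apply, if_neg, zero_mul]
    rintro ⟨-, hPex⟩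
    exact h ((pex_iff lam hn i).mp hPex)

include hn in
lemma AN_apply (M : Matrix (Fin n) (Fin n) K) (i j : Fin n) :
    (M * (jordanNilpotent K n k lam)ᵀ) i j =
      if h : goodIdx lam (j : ℕ) then M i ⟨(j : ℕ) + 1, good_succ_lt lam hn h⟩
      else 0 := by
  rw [Matrix.mul_apply]
  unfold jordanNilpotent
  split_ifs with h
  · have hPex := (pex_iff lam hn j).mpr h
    rw [Finset.sum_eq_single (⟨(j : ℕ) + 1, good_succ_lt lam hn h⟩ : Fin n)]
    · rw [Matrix.transpose_apply, Matrix.of_apply, if_pos ⟨rfl, hPex⟩, mul_one]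
    · intro b _ hb
      rw [Matrix.transpose_apply, Matrix.of_apply, if_neg, mul_zero]
      rintro ⟨hb1, -⟩
      exact hb (Fin.ext hb1)
    · intro hmem
      exact absurd (Finset.mem_univ _) hmem
  · apply Finset.sum_eq_zero
    intro b _
    rw [Matrix.transpose_apply, Matrix.of_apply, if_neg, mul_zero]
    rintro ⟨-, hPex⟩
    exact h ((pex_iff lam hn j).mp hPex)

include hpos hmono hn in
lemma AM_symm : (AM lam K (n := n)).IsSymm := by
  apply Matrix.IsSymm.ext
  intro i j
  show (if ((i : ℕ)) = sigN lam (j : ℕ) then epsN lam K (j : ℕ) else 0) =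
    (if ((j : ℕ)) = sigN lam (i : ℕ) then epsN lam K (i : ℕ) else 0)
  by_cases h : (j : ℕ) = sigN lam (i : ℕ)
  · have h2 : (i : ℕ) = sigN lam (j : ℕ) := by
      rw [h, sig_sig lam hpos hmono hn i]
    rw [if_pos h2, if_pos h, h, eps_sig lam hpos hmono hn K i]
  · have h2 : ¬ ((i : ℕ) = sigN lam (j : ℕ)) := by
      intro hc
      exact h (by rw [hc, sig_sig lam hpos hmono hn j])
    rw [if_neg h2, if_neg h]

include hpos hmono hn in
lemma AM_step (i j : Fin n) (hi : goodIdx lam (i : ℕ))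
    (hne : AM lam K (n := n) ⟨(i : ℕ) + 1, good_succ_lt lam hn hi⟩ j ≠ 0) :
    ∃ hj : goodIdx lam (j : ℕ),
      AM lam K (n := n) ⟨(j : ℕ) + 1, good_succ_lt lam hn hj⟩ i =
        - AM lam K (n := n) ⟨(i : ℕ) + 1, good_succ_lt lam hn hi⟩ j := by
  obtain ⟨r, q, hr, hq, hie⟩ := hi
  have hval : ((⟨(i : ℕ) + 1, good_succ_lt lam hn ⟨r, q, hr, hq, hie⟩⟩ : Fin n) : ℕ) =
      psumN lam r + (q + 1) := by
    show (i : ℕ) + 1 = psumN lam r + (q + 1)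
    omega
  have hA1 : AM lam K (n := n) ⟨(i : ℕ) + 1, good_succ_lt lam hn ⟨r, q, hr, hq, hie⟩⟩ j =
      if (j : ℕ) = sigN lam (psumN lam r + (q + 1)) then epsN lam K (psumN lam r + (q + 1))
      else 0 := by
    rw [AM, Matrix.of_apply, hval]
  rw [hA1] at hne ⊢
  by_cases hcond : (j : ℕ) = sigN lam (psumN lam r + (q + 1))
  swap
  · exact absurd (if_neg hcond) hne
  rw [if_pos hcond] at hne ⊢
  obtain ⟨s1, s2, r', q', hr', hq', he'⟩ := sig_step lam hpos hmono hn K hr hq hne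
  have hj : goodIdx lam (j : ℕ) := ⟨r', q', hr', hq', by rw [hcond, he']⟩
  refine ⟨hj, ?_⟩
  have hjval : ((⟨(j : ℕ) + 1, good_succ_lt lam hn hj⟩ : Fin n) : ℕ) =
      sigN lam (psumN lam r + q) := by
    show (j : ℕ) + 1 = sigN lam (psumN lam r + q)
    rw [hcond, s1]
  have hA2 : AM lam K (n := n) ⟨(j : ℕ) + 1, good_succ_lt lam hn hj⟩ i =
      if (i : ℕ) = sigN lam (sigN lam (psumN lam r + q))
      then epsN lam K (sigN lam (psumN lam r + q)) else 0 := by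
    rw [AM, Matrix.of_apply, hjval]
  have hfin : sigN lam (sigN lam (psumN lam r + q)) = (i : ℕ) := by
    rw [← hie]
    exact sig_sig lam hpos hmono hn i
  have hepsfin : epsN lam K (sigN lam (psumN lam r + q)) = epsN lam K (psumN lam r + q) := by
    rw [← hie]
    exact eps_sig lam hpos hmono hn K i
  rw [hA2, hfin, if_pos rfl, hepsfin, s2, neg_neg]

include hpos hmono hn in
lemma AM_eq :
    jordanNilpotent K n k lam * AM lam K + AM lam K * (jordanNilpotent K n k lam)ᵀ = 0 := by
  ext i j
  rw [Matrix.add_apply, Matrix.zero_apply, NA_apply lam K hn, AN_apply lam K hn]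
  have hsymm := AM_symm lam K hpos hmono hn
  by_cases hi : goodIdx lam (i : ℕ) <;> by_cases hj : goodIdx lam (j : ℕ)
  · rw [dif_pos hi, dif_pos hj]
    rw [← hsymm.apply i ⟨(j : ℕ) + 1, good_succ_lt lam hn hj⟩]
    by_cases hA : AM lam K (n := n) ⟨(i : ℕ) + 1, good_succ_lt lam hn hi⟩ j = 0
    · by_cases hB : AM lam K (n := n) ⟨(j : ℕ) + 1, good_succ_lt lam hn hj⟩ i = 0
      · rw [hA, hB, add_zero]
      · obtain ⟨hi', heq⟩ := AM_step lam K hpos hmono hn j i hj hB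
        rw [heq, neg_eq_zero] at hA
        exact absurd hA hB
    · obtain ⟨hj', heq⟩ := AM_step lam K hpos hmono hn i j hi hA
      rw [heq]
      ring
  · rw [dif_pos hi, dif_neg hj, add_zero]
    by_contra hA
    obtain ⟨hj', -⟩ := AM_step lam K hpos hmono hn i j hi hA
    exact hj hj'
  · rw [dif_neg hi, dif_pos hj, zero_add]
    rw [← hsymm.apply i ⟨(j : ℕ) + 1, good_succ_lt lam hn hj⟩]
    by_contra hB
    obtain ⟨hi', -⟩ := AM_step lam K hpos hmono hn j i hj hB
    exact hi hi'
  · rw [dif_neg hi, dif_neg hj, add_zero]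

include hpos hmono hn in
lemma AM_sq :
    AM lam K * AM lam K =
      Matrix.diagonal (fun i : Fin n => (epsN lam K (i : ℕ)) ^ 2) := by
  ext i j
  rw [Matrix.mul_apply, Matrix.diagonal_apply]
  rw [Finset.sum_eq_single (⟨sigN lam (i : ℕ), sig_lt_n lam hpos hmono hn i⟩ : Fin n)]
  · rw [AM, Matrix.of_apply, Matrix.of_apply, if_pos rfl]
    simp only [Fin.val_mk]
    rw [sig_sig lam hpos hmono hn i, eps_sig lam hpos hmono hn K i]
    by_cases h : i = j
    · rw [if_pos h, if_pos (by rw [h]), sq]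
    · rw [if_neg h, if_neg (by intro hc; exact h (Fin.ext hc.symm)), mul_zero]
  · intro b _ hb
    rw [AM, Matrix.of_apply, if_neg, zero_mul]
    intro hc
    exact hb (Fin.ext hc)
  · intro hmem
    exact absurd (Finset.mem_univ _) hmem

include hpos hmono hn in
lemma eps_zero_card :
    (Finset.univ.filter fun i : Fin n => epsN lam K (i : ℕ) = 0).card = degeneracy lam := by
  rw [← leftover_card lam hpos hmono]
  apply Finset.card_bij (fun (i : Fin n) _ => (⟨blkN lam (i : ℕ), (fin_rep lam hn i).1⟩ : Fin k))
  · intro i hi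
    simp only [Finset.mem_filter, Finset.mem_univ, true_and] at hi ⊢
    obtain ⟨h1, h2, h3⟩ := fin_rep lam hn i
    rw [h3] at hi
    obtain ⟨e1, e2, e3, e4⟩ := (eps_zero_iff lam hn K h1 h2).mp hi
    exact ⟨e1, e2, e3⟩
  · intro a ha b hb hab
    simp only [Finset.mem_filter, Finset.mem_univ, true_and] at ha hb
    obtain ⟨ha1, ha2, ha3⟩ := fin_rep lam hn a
    obtain ⟨hb1, hb2, hb3⟩ := fin_rep lam hn b
    rw [ha3] at ha
    rw [hb3] at hb
    have hA := (eps_zero_iff lam hn K ha1 ha2).mp ha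
    have hB := (eps_zero_iff lam hn K hb1 hb2).mp hb
    have hblk : blkN lam (a : ℕ) = blkN lam (b : ℕ) := by
      have := congrArg Fin.val hab
      simpa using this
    apply Fin.ext
    rw [ha3, hb3, hblk, hA.2.2.2, hB.2.2.2, hblk]
  · intro r hr
    simp only [Finset.mem_filter, Finset.mem_univ, true_and] at hr
    obtain ⟨h1, h2, h3⟩ := hr
    have hrk : (r : ℕ) < k := r.isLt
    have hm1 : 1 ≤ lamN lam (r : ℕ) := lamN_pos lam hpos hrk
    have hplt : lamN lam (r : ℕ) - 1 < lamN lam (r : ℕ) := by omega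
    refine ⟨⟨psumN lam (r : ℕ) + (lamN lam (r : ℕ) - 1),
      mem_block_lt_n lam hn hrk hplt⟩, ?_, ?_⟩
    · simp only [Finset.mem_filter, Finset.mem_univ, true_and]
      exact (eps_zero_iff lam hn K hrk hplt).mpr ⟨h1, h2, h3, rfl⟩
    · obtain ⟨hb, hp⟩ := blk_pos_eq lam hn hrk hplt
      exact Fin.ext (by simpa using hb)

end Final

end JFR

/-- There is a symmetric matrix `A` with `N_λ * A + A * N_λᵀ = 0` of rank exactly
`n - d(λ)`. -/
theorem jordan_fixed_rank_attained (K : Type*) [Field K] [CharZero K] (n k : ℕ)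
    (lam : Fin k → ℕ) (hpos : ∀ r, 1 ≤ lam r) (hmono : Antitone lam)
    (hn : ∑ r, lam r = n) :
    ∃ A : Matrix (Fin n) (Fin n) K, A.IsSymm ∧
      jordanNilpotent K n k lam * A + A * (jordanNilpotent K n k lam)ᵀ = 0 ∧
      A.rank = n - degeneracy lam := by
  classical
  refine ⟨JFR.AM lam K, JFR.AM_symm lam K hpos hmono hn,
    JFR.AM_eq lam K hpos hmono hn, ?_⟩
  have hsq := JFR.AM_sq lam K hpos hmono hn
  have hlow : (Matrix.diagonal (fun i : Fin n => (JFR.epsN lam K (i : ℕ)) ^ 2)).rank ≤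
      (JFR.AM lam K (n := n)).rank := by
    rw [← hsq]
    exact Matrix.rank_mul_le_left _ _
  set e : Fin n → K := fun i => if JFR.epsN lam K (i : ℕ) = 0 then 0 else 1 with he
  have hfac : Matrix.diagonal e * JFR.AM lam K = JFR.AM lam K (n := n) := by
    ext i j
    rw [Matrix.diagonal_mul]
    by_cases h : JFR.epsN lam K (i : ℕ) = 0
    · have hz : JFR.AM lam K (n := n) i j = 0 := by
        rw [JFR.AM, Matrix.of_apply, h]
        simp
      rw [hz, mul_zero]
    · show (if JFR.epsN lam K (i : ℕ) = 0 then (0 : K) else 1) * JFR.AM lam K (n := n) i j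
        = JFR.AM lam K (n := n) i j
      rw [if_neg h, one_mul]
  have hup : (JFR.AM lam K (n := n)).rank ≤ (Matrix.diagonal e).rank := by
    conv_lhs => rw [← hfac]
    exact Matrix.rank_mul_le_left _ _
  rw [Matrix.rank_diagonal] at hlow hup
  have hc1 : Fintype.card {i : Fin n // (JFR.epsN lam K (i : ℕ)) ^ 2 ≠ 0} =
      Fintype.card {i : Fin n // ¬ (JFR.epsN lam K (i : ℕ) = 0)} := by
    apply Fintype.card_congr
    apply Equiv.subtypeEquivRight
    intro i
    rw [pow_ne_zero_iff (two_ne_zero)]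
  have hc2 : Fintype.card {i : Fin n // e i ≠ 0} =
      Fintype.card {i : Fin n // ¬ (JFR.epsN lam K (i : ℕ) = 0)} := by
    apply Fintype.card_congr
    apply Equiv.subtypeEquivRight
    intro i
    rw [he]
    by_cases h : JFR.epsN lam K (i : ℕ) = 0 <;> simp [h]
  rw [hc1] at hlow
  rw [hc2] at hup
  have hrank : (JFR.AM lam K (n := n)).rank =
      Fintype.card {i : Fin n // ¬ (JFR.epsN lam K (i : ℕ) = 0)} :=
    le_antisymm hup hlow
  rw [hrank, Fintype.card_subtype]
  have hz := JFR.eps_zero_card lam K hpos hmono hn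
  have htot := Finset.card_filter_add_card_filter_not
    (s := (Finset.univ : Finset (Fin n))) (p := fun i => JFR.epsN lam K (i : ℕ) = 0)
  rw [Finset.card_univ, Fintype.card_fin] at htot
  omega
end
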